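/- For every 1 ≤ k ≤ n−1, the ideal I + (x_{k+1} − y_k) of S = K[x_1,…,x_n, y_1,…,y_n, z], generated by I = I_{L_k} together with the element x_{k+1} − y_k, is a radical ideal. -/

import Mathlib

open MvPolynomial

/-- The variable `x_i` (for `1 ≤ i ≤ n`) of the polynomial ring
`S = K[x_1,…,x_n, y_1,…,y_n, z]` in `2n+1` variables. -/
noncomputable def xv (K : Type*) [Field K] (n i : ℕ) :
    MvPolynomial (Fin n ⊕ Fin n ⊕ Unit) K :=
  if h : 1 ≤ i ∧ i ≤ n then X (Sum.inl ⟨i - 1, by omega⟩) else 0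

/-- The variable `y_i` (for `1 ≤ i ≤ n`) of `S = K[x_1,…,x_n, y_1,…,y_n, z]`. -/
noncomputable def yv (K : Type*) [Field K] (n i : ℕ) :
    MvPolynomial (Fin n ⊕ Fin n ⊕ Unit) K :=
  if h : 1 ≤ i ∧ i ≤ n then X (Sum.inr (Sum.inl ⟨i - 1, by omega⟩)) else 0

/-- The variable `z` of `S = K[x_1,…,x_n, y_1,…,y_n, z]`. -/
noncomputable def zv (K : Type*) [Field K] (n : ℕ) :
    MvPolynomial (Fin n ⊕ Fin n ⊕ Unit) K :=
  X (Sum.inr (Sum.inr ()))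

/-- The join-meet ideal `I = I_{L_k} ⊆ K[x_1,…,x_n, y_1,…,y_n, z]`, generated by the binomials
`x_j·y_i − x_i·y_j` for `1 ≤ i < j ≤ n`, `z·x_j − x_k·y_j` for `k+1 ≤ j ≤ n`, and
`z·y_i − x_i·y_{k+1}` for `1 ≤ i ≤ k`. -/
noncomputable def LkIdeal (K : Type*) [Field K] (n k : ℕ) :
    Ideal (MvPolynomial (Fin n ⊕ Fin n ⊕ Unit) K) :=
  Ideal.span
    ({f | ∃ i j : ℕ, 1 ≤ i ∧ i < j ∧ j ≤ n ∧
        f = xv K n j * yv K n i - xv K n i * yv K n j} ∪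
      {f | ∃ j : ℕ, k + 1 ≤ j ∧ j ≤ n ∧
        f = zv K n * xv K n j - xv K n k * yv K n j} ∪
      {f | ∃ i : ℕ, 1 ≤ i ∧ i ≤ k ∧
        f = zv K n * yv K n i - xv K n i * yv K n (k + 1)})

open MvPolynomial

namespace LkProof

set_option linter.unusedSectionVars false

variable {K : Type*} [Field K] {n : ℕ}

/-- product of monomials with coefficient 1 -/
lemma prod_monomial {α τ : Type*} (s : Finset α) (g : α → (τ →₀ ℕ)) :
    (∏ v ∈ s, (monomial (g v) (1:K))) = monomial (∑ v ∈ s, g v) 1 := by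
  classical
  induction s using Finset.induction_on with
  | empty => simp [monomial_zero']
  | insert _ _ hv ih =>
      rename_i a s'
      rw [Finset.prod_insert hv, ih, Finset.sum_insert hv, monomial_mul, one_mul]

/-- exponent image map -/
noncomputable def expMap {α τ : Type*} (w : α → (τ →₀ ℕ)) (m : α →₀ ℕ) : τ →₀ ℕ :=
  m.sum fun v e => e • w v

lemma expMap_apply {α τ : Type*} [Fintype α] (w : α → (τ →₀ ℕ)) (m : α →₀ ℕ) (t : τ) :
    expMap w m t = ∑ v : α, m v * (w v t) := by
  classical
  rw [expMap, Finsupp.sum_fintype _ _ (fun v => by simp), Finsupp.finset_sum_apply]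
  simp [mul_comm]

lemma aeval_monomial_eq {α τ : Type*} {θ : α → MvPolynomial τ K} {w : α → (τ →₀ ℕ)}
    (m : α →₀ ℕ) (c : K) (h : ∀ v ∈ m.support, θ v = monomial (w v) 1) :
    aeval θ (monomial m c) = monomial (expMap w m) c := by
  classical
  rw [aeval_monomial]
  have : (m.prod fun v e => θ v ^ e) = monomial (expMap w m) (1:K) := by
    rw [Finsupp.prod, expMap, Finsupp.sum]
    rw [← prod_monomial m.support (fun v => m v • w v)]
    apply Finset.prod_congr rfl
    intro v hv
    rw [h v hv, monomial_pow, one_pow]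
  rw [this]
  simp [algebraMap_eq, C_mul_monomial]

/-- if a monomial contains a variable sent to zero, its image is zero -/
lemma aeval_monomial_zero {α τ : Type*} {θ : α → MvPolynomial τ K}
    (m : α →₀ ℕ) (c : K) (v : α) (hv : m v ≠ 0) (h : θ v = 0) :
    aeval θ (monomial m c) = 0 := by
  classical
  rw [aeval_monomial, Finsupp.prod]
  have hvs : v ∈ m.support := Finsupp.mem_support_iff.mpr hv
  rw [Finset.prod_eq_prod_diff_singleton_mul hvs]
  rw [h, zero_pow hv]
  ring

/-- support of image of aeval -/
lemma support_aeval_subset {α τ : Type*} {θ : α → MvPolynomial τ K} (g : MvPolynomial α K)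
    (Pr : (τ →₀ ℕ) → Prop)
    (h : ∀ m ∈ g.support, ∀ w ∈ (aeval θ (monomial m (coeff m g)) : MvPolynomial τ K).support, Pr w) :
    ∀ w ∈ (aeval θ g : MvPolynomial τ K).support, Pr w := by
  classical
  intro w hw
  rw [← support_sum_monomial_coeff g, map_sum] at hw
  have := MvPolynomial.support_sum hw
  obtain ⟨m, hm, hw2⟩ := Finset.mem_biUnion.mp this
  exact h m hm w hw2


open scoped Classical

lemma sum_delta {α : Type*} (m : α →₀ ℕ) (a : α) :
    (m.sum fun v e => if v = a then e else 0) = m a := by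
  rw [Finsupp.sum, Finset.sum_ite_eq' m.support a (fun v => m v)]
  by_cases h : a ∈ m.support
  · simp [h]
  · simp [h, Finsupp.notMem_support_iff.mp h]

lemma sum_delta2 {α : Type*} (m : α →₀ ℕ) (a b : α) (f : α → ℕ)
    (hf : ∀ v, f v = (if v = a then 1 else 0) + (if v = b then 1 else 0)) :
    (m.sum fun v e => e * f v) = m a + m b := by
  have key : ∀ (v : α) (e : ℕ), e * f v = (if v = a then e else 0) + (if v = b then e else 0) := by
    intro v e; rw [hf v]
    by_cases h1 : v = a
    · by_cases h2 : v = b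
      · have hab : a = b := h1.symm.trans h2
        subst h1; simp [hab, mul_two]
      · have hab : ¬(a = b) := fun h => h2 (h1.trans h)
        subst h1; simp [hab, mul_two]
    · by_cases h2 : v = b
      · have hab : ¬(b = a) := fun h => h1 (h2.trans h)
        subst h2; simp [hab, h1]
      · simp [h1, h2]
  calc (m.sum fun v e => e * f v)
      = m.sum fun v e => (if v = a then e else 0) + (if v = b then e else 0) := by
        apply Finsupp.sum_congr; intro v _; exact key v (m v)
    _ = (m.sum fun v e => if v = a then e else 0) + (m.sum fun v e => if v = b then e else 0) :=
        Finsupp.sum_add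
    _ = m a + m b := by rw [sum_delta, sum_delta]

lemma sum_delta1 {α : Type*} (m : α →₀ ℕ) (a : α) (f : α → ℕ)
    (hf : ∀ v, f v = (if v = a then 1 else 0)) :
    (m.sum fun v e => e * f v) = m a := by
  calc (m.sum fun v e => e * f v)
      = m.sum fun v e => (if v = a then e else 0) := by
        apply Finsupp.sum_congr; intro v _; rw [hf v]
        by_cases h1 : v = a <;> simp [h1]
    _ = m a := sum_delta m a

lemma sum_delta0 {α : Type*} (m : α →₀ ℕ) (f : α → ℕ)
    (hf : ∀ v, f v = 0) :
    (m.sum fun v e => e * f v) = 0 := by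
  calc (m.sum fun v e => e * f v)
      = m.sum (fun v e => 0) := by
        apply Finsupp.sum_congr; intro v _; rw [hf v, mul_zero]
    _ = 0 := Finset.sum_const_zero

lemma expMap_apply' {α τ : Type*} (w : α → (τ →₀ ℕ)) (m : α →₀ ℕ) (t : τ) :
    expMap w m t = m.sum fun v e => e * (w v t) := by
  rw [expMap, Finsupp.sum, Finsupp.sum, Finsupp.finset_sum_apply]
  exact Finset.sum_congr rfl fun v _ => by simp


section Defs
variable (K : Type*) [Field K] (n : ℕ)

/-- the Segre-type map `x_i ↦ s v_i`, `y_i ↦ t v_i`, `z ↦ 0`. -/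
noncomputable def phi0 :
    MvPolynomial (Fin n ⊕ Fin n ⊕ Unit) K →ₐ[K] MvPolynomial (Fin n ⊕ Bool) K :=
  aeval fun v => match v with
    | Sum.inl i => X (Sum.inr false) * X (Sum.inl i)
    | Sum.inr (Sum.inl i) => X (Sum.inr true) * X (Sum.inl i)
    | Sum.inr (Sum.inr _) => 0

/-- exponent version of `phi0` -/
noncomputable def wphi : (Fin n ⊕ Fin n ⊕ Unit) → (Fin n ⊕ Bool) →₀ ℕ := fun v => match v with
    | Sum.inl i => Finsupp.single (Sum.inr false) 1 + Finsupp.single (Sum.inl i) 1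
    | Sum.inr (Sum.inl i) => Finsupp.single (Sum.inr true) 1 + Finsupp.single (Sum.inl i) 1
    | Sum.inr (Sum.inr _) => 0

variable {n}

/-- the substitution `v_κ ↦ s u`, `v_{κ'} ↦ t u`, where `u := v_κ`. -/
noncomputable def zeta (κ κ' : Fin n) :
    MvPolynomial (Fin n ⊕ Bool) K →ₐ[K] MvPolynomial (Fin n ⊕ Bool) K :=
  aeval fun v => match v with
    | Sum.inl i => if i = κ then X (Sum.inr false) * X (Sum.inl κ)
        else if i = κ' then X (Sum.inr true) * X (Sum.inl κ) else X (Sum.inl i)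
    | Sum.inr b => X (Sum.inr b)

/-- exponent version of `zeta` -/
noncomputable def wzeta (κ κ' : Fin n) : (Fin n ⊕ Bool) → (Fin n ⊕ Bool) →₀ ℕ := fun v => match v with
    | Sum.inl i => if i = κ then Finsupp.single (Sum.inr false) 1 + Finsupp.single (Sum.inl κ) 1
        else if i = κ' then Finsupp.single (Sum.inr true) 1 + Finsupp.single (Sum.inl κ) 1
        else Finsupp.single (Sum.inl i) 1
    | Sum.inr b => Finsupp.single (Sum.inr b) 1

/-- kill all `x`'s and the `y_i` for `i ≤ κ` -/
noncomputable def psi2 (κ : Fin n) :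
    MvPolynomial (Fin n ⊕ Fin n ⊕ Unit) K →ₐ[K] MvPolynomial (Fin n ⊕ Fin n ⊕ Unit) K :=
  aeval fun v => match v with
    | Sum.inl _ => 0
    | Sum.inr (Sum.inl i) => if i ≤ κ then 0 else X (Sum.inr (Sum.inl i))
    | Sum.inr (Sum.inr _) => X (Sum.inr (Sum.inr ()))

/-- kill all `y`'s and the `x_j` for `κ' ≤ j` -/
noncomputable def psi3 (κ' : Fin n) :
    MvPolynomial (Fin n ⊕ Fin n ⊕ Unit) K →ₐ[K] MvPolynomial (Fin n ⊕ Fin n ⊕ Unit) K :=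
  aeval fun v => match v with
    | Sum.inl j => if κ' ≤ j then 0 else X (Sum.inl j)
    | Sum.inr (Sum.inl _) => 0
    | Sum.inr (Sum.inr _) => X (Sum.inr (Sum.inr ()))

variable (n)

/-- kill `z` -/
noncomputable def r0 :
    MvPolynomial (Fin n ⊕ Fin n ⊕ Unit) K →ₐ[K] MvPolynomial (Fin n ⊕ Fin n ⊕ Unit) K :=
  aeval fun v => match v with
    | Sum.inl i => X (Sum.inl i)
    | Sum.inr (Sum.inl i) => X (Sum.inr (Sum.inl i))
    | Sum.inr (Sum.inr _) => 0

variable {n}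

/-- the 2×2 minors -/
noncomputable def mgen (i j : Fin n) : MvPolynomial (Fin n ⊕ Fin n ⊕ Unit) K :=
  X (Sum.inl j) * X (Sum.inr (Sum.inl i)) - X (Sum.inl i) * X (Sum.inr (Sum.inl j))

/-- the linear form `x_{κ'} - y_κ` -/
noncomputable def dgen (κ κ' : Fin n) : MvPolynomial (Fin n ⊕ Fin n ⊕ Unit) K :=
  X (Sum.inl κ') - X (Sum.inr (Sum.inl κ))

/-- the quadric `t v_κ - s v_{κ'}` -/
noncomputable def f0 (κ κ' : Fin n) : MvPolynomial (Fin n ⊕ Bool) K :=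
  X (Sum.inr true) * X (Sum.inl κ) - X (Sum.inr false) * X (Sum.inl κ')

variable (n)

/-- the set of all minors -/
def MGset : Set (MvPolynomial (Fin n ⊕ Fin n ⊕ Unit) K) := {f | ∃ i j : Fin n, f = mgen K i j}

variable {n}

/-- the transformed ideal -/
noncomputable def Jp (κ κ' : Fin n) : Ideal (MvPolynomial (Fin n ⊕ Fin n ⊕ Unit) K) :=
  Ideal.span (MGset K n ∪ {dgen K κ κ'}
    ∪ {f | ∃ j : Fin n, κ' ≤ j ∧ f = X (Sum.inr (Sum.inr ())) * X (Sum.inl j)}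
    ∪ {f | ∃ i : Fin n, i ≤ κ ∧ f = X (Sum.inr (Sum.inr ())) * X (Sum.inr (Sum.inl i))})

end Defs

section Basic
variable {K : Type*} [Field K] {n : ℕ}

lemma X_mul_X_eq {τ : Type*} (a b : τ) :
    (X a * X b : MvPolynomial τ K) = monomial (Finsupp.single a 1 + Finsupp.single b 1) 1 := by
  have ha : (X a : MvPolynomial τ K) = monomial (Finsupp.single a 1) 1 := rfl
  have hb : (X b : MvPolynomial τ K) = monomial (Finsupp.single b 1) 1 := rfl
  rw [ha, hb, monomial_mul, one_mul]

lemma expMap_id {α : Type*} (m : α →₀ ℕ) : expMap (fun v => Finsupp.single v 1) m = m := by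
  rw [expMap]
  have : ∀ (v : α) (e : ℕ), e • Finsupp.single v (1:ℕ) = Finsupp.single v e := by
    intro v e; rw [Finsupp.smul_single, smul_eq_mul, mul_one]
  calc m.sum (fun v e => e • Finsupp.single v 1) = m.sum (fun v e => Finsupp.single v e) := by
        apply Finsupp.sum_congr; intro v _; exact this v (m v)
    _ = m := Finsupp.sum_single m

/-- substitution difference lemma -/
lemma sub_aeval_mem {σ : Type*} (f : σ → MvPolynomial σ K) (I : Ideal (MvPolynomial σ K))
    (h : ∀ v, X v - f v ∈ I) (g : MvPolynomial σ K) : g - aeval f g ∈ I := by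
  induction g using MvPolynomial.induction_on with
  | C a => simp [aeval_C, algebraMap_eq]
  | add p q hp hq =>
      have : p + q - aeval f (p + q) = (p - aeval f p) + (q - aeval f q) := by
        rw [map_add]; ring
      rw [this]; exact add_mem hp hq
  | mul_X p v hp =>
      have : p * X v - aeval f (p * X v)
          = (p - aeval f p) * X v + aeval f p * (X v - f v) := by
        rw [map_mul, aeval_X]; ring
      rw [this]
      exact add_mem (Ideal.mul_mem_right _ _ hp) (Ideal.mul_mem_left _ _ (h v))

end Basic


section MonoLemmas
variable {K : Type*} [Field K] {n : ℕ}

lemma phi0_monomial (m : (Fin n ⊕ Fin n ⊕ Unit) →₀ ℕ) (c : K)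
    (hz : m (Sum.inr (Sum.inr ())) = 0) :
    phi0 K n (monomial m c) = monomial (expMap (wphi n) m) c := by
  unfold phi0
  apply aeval_monomial_eq
  intro v hv
  rcases v with i | i | u
  · simpa [wphi] using X_mul_X_eq (K := K) (Sum.inr false : Fin n ⊕ Bool) (Sum.inl i)
  · simpa [wphi] using X_mul_X_eq (K := K) (Sum.inr true : Fin n ⊕ Bool) (Sum.inl i)
  · exact absurd (Finsupp.mem_support_iff.mp hv) (by simpa using hz)

lemma phi0_monomial_zero (m : (Fin n ⊕ Fin n ⊕ Unit) →₀ ℕ) (c : K)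
    (hz : m (Sum.inr (Sum.inr ())) ≠ 0) :
    phi0 K n (monomial m c) = 0 := by
  unfold phi0
  exact aeval_monomial_zero m c (Sum.inr (Sum.inr ())) hz rfl

lemma zeta_monomial (κ κ' : Fin n) (w : (Fin n ⊕ Bool) →₀ ℕ) (c : K) :
    zeta K κ κ' (monomial w c) = monomial (expMap (wzeta κ κ') w) c := by
  unfold zeta
  apply aeval_monomial_eq
  intro v _
  rcases v with i | b
  · by_cases h1 : i = κ
    · simpa [wzeta, h1] using X_mul_X_eq (K := K) (Sum.inr false : Fin n ⊕ Bool) (Sum.inl κ)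
    · by_cases h2 : i = κ'
      · have h3 : ¬(κ' = κ) := h2 ▸ h1
        simpa [wzeta, h1, h2, h3] using X_mul_X_eq (K := K) (Sum.inr true : Fin n ⊕ Bool) (Sum.inl κ)
      · simp [wzeta, h1, h2]; rfl
  · simp [wzeta]; rfl

lemma r0_monomial (m : (Fin n ⊕ Fin n ⊕ Unit) →₀ ℕ) (c : K)
    (hz : m (Sum.inr (Sum.inr ())) = 0) :
    r0 K n (monomial m c) = monomial m c := by
  unfold r0
  have := aeval_monomial_eq (K := K)
    (θ := fun v : Fin n ⊕ Fin n ⊕ Unit => match v with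
      | Sum.inl i => X (Sum.inl i)
      | Sum.inr (Sum.inl i) => X (Sum.inr (Sum.inl i))
      | Sum.inr (Sum.inr _) => 0)
    (w := fun v => Finsupp.single v 1) m c ?_
  · rw [this, expMap_id]
  · intro v hv
    rcases v with i | i | u
    · rfl
    · rfl
    · exact absurd (Finsupp.mem_support_iff.mp hv) (by simpa using hz)

/-- kernel elements of variable-killing maps have all monomials hitting a killed variable -/
lemma aeval_kill_support {σ : Type*} (f : σ → MvPolynomial σ K)
    (hf : ∀ v, f v = 0 ∨ f v = X v) {g : MvPolynomial σ K} (hg : aeval f g = 0) :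
    ∀ m ∈ g.support, ∃ v, m v ≠ 0 ∧ f v = 0 := by
  intro m hm
  by_contra hc
  push_neg at hc
  have him : ∀ (m' : σ →₀ ℕ) (c : K), (∀ v ∈ m'.support, f v = X v) →
      aeval f (monomial m' c) = monomial m' c := by
    intro m' c h
    have := aeval_monomial_eq (θ := f) (w := fun v => Finsupp.single v 1) m' c ?_
    · rw [this, expMap_id]
    · intro v hv; rw [h v hv]; rfl
  have hsum : aeval f g = ∑ m' ∈ g.support, aeval f (monomial m' (coeff m' g)) := by
    conv_lhs => rw [← support_sum_monomial_coeff g]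
    rw [map_sum]
  have hco : coeff m (aeval f g) = coeff m g := by
    rw [hsum, coeff_sum, Finset.sum_eq_single m]
    · rw [him m (coeff m g) ?_, coeff_monomial, if_pos rfl]
      intro v hv
      rcases hf v with h0 | hX
      · exact absurd h0 (hc v (Finsupp.mem_support_iff.mp hv))
      · exact hX
    · intro m' _ hne
      by_cases hk : ∃ v, m' v ≠ 0 ∧ f v = 0
      · obtain ⟨v, hv1, hv2⟩ := hk
        rw [aeval_monomial_zero m' _ v hv1 hv2, coeff_zero]
      · push_neg at hk
        rw [him m' _ ?_, coeff_monomial, if_neg hne]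
        intro v hv
        rcases hf v with h0 | hX
        · exact absurd h0 (hk v (Finsupp.mem_support_iff.mp hv))
        · exact hX
    · intro h; exact absurd hm h
  rw [hg, coeff_zero] at hco
  exact Finsupp.mem_support_iff.mp hm hco.symm

lemma expMap_wphi_inl (m : (Fin n ⊕ Fin n ⊕ Unit) →₀ ℕ) (i : Fin n) :
    expMap (wphi n) m (Sum.inl i) = m (Sum.inl i) + m (Sum.inr (Sum.inl i)) := by
  rw [expMap_apply']
  apply sum_delta2 m (Sum.inl i) (Sum.inr (Sum.inl i))
  intro v
  rcases v with j | j | u <;> simp [wphi, Finsupp.single_apply]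

lemma expMap_wphi_s (m : (Fin n ⊕ Fin n ⊕ Unit) →₀ ℕ) :
    expMap (wphi n) m (Sum.inr false) = ∑ j : Fin n, m (Sum.inl j) := by
  rw [expMap_apply]
  rw [Fintype.sum_sum_type]
  have h1 : ∀ j : Fin n, m (Sum.inl j) * (wphi n (Sum.inl j) (Sum.inr false)) = m (Sum.inl j) := by
    intro j; simp [wphi, Finsupp.single_apply]
  have h2 : (∑ c : Fin n ⊕ Unit, m (Sum.inr c) * (wphi n (Sum.inr c) (Sum.inr false))) = 0 := by
    apply Finset.sum_eq_zero
    intro c _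
    rcases c with i | u <;> simp [wphi, Finsupp.single_apply]
  rw [h2, add_zero]
  exact Finset.sum_congr rfl fun j _ => h1 j

lemma expMap_wphi_t (m : (Fin n ⊕ Fin n ⊕ Unit) →₀ ℕ) :
    expMap (wphi n) m (Sum.inr true) = ∑ j : Fin n, m (Sum.inr (Sum.inl j)) := by
  rw [expMap_apply]
  rw [Fintype.sum_sum_type]
  have h1 : (∑ j : Fin n, m (Sum.inl j) * (wphi n (Sum.inl j) (Sum.inr true))) = 0 := by
    apply Finset.sum_eq_zero
    intro j _; simp [wphi, Finsupp.single_apply]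
  rw [h1, zero_add]
  rw [Fintype.sum_sum_type]
  have h2 : (∑ u : Unit, m (Sum.inr (Sum.inr u)) * (wphi n (Sum.inr (Sum.inr u)) (Sum.inr true))) = 0 := by
    apply Finset.sum_eq_zero
    intro u _; simp [wphi]
  rw [h2, add_zero]
  apply Finset.sum_congr rfl
  intro j _; simp [wphi, Finsupp.single_apply]

end MonoLemmas


section WzetaSlots
variable {K : Type*} [Field K] {n : ℕ}

lemma expMap_wzeta_u (κ κ' : Fin n) (hne : κ ≠ κ') (w : (Fin n ⊕ Bool) →₀ ℕ) :
    expMap (wzeta κ κ') w (Sum.inl κ) = w (Sum.inl κ) + w (Sum.inl κ') := by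
  rw [expMap_apply']
  apply sum_delta2 w (Sum.inl κ) (Sum.inl κ')
  intro v
  rcases v with i | b
  · by_cases h1 : i = κ
    · subst h1; simp [wzeta, Finsupp.single_apply, hne]
    · by_cases h2 : i = κ'
      · subst h2; simp [wzeta, Finsupp.single_apply, h1]
      · simp [wzeta, Finsupp.single_apply, h1, h2, Ne.symm h1, Ne.symm h2]
  · simp [wzeta, Finsupp.single_apply]

lemma expMap_wzeta_kp (κ κ' : Fin n) (hne : κ ≠ κ') (w : (Fin n ⊕ Bool) →₀ ℕ) :
    expMap (wzeta κ κ') w (Sum.inl κ') = 0 := by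
  rw [expMap_apply']
  apply sum_delta0
  intro v
  rcases v with i | b
  · by_cases h1 : i = κ
    · subst h1; simp [wzeta, Finsupp.single_apply, hne]
    · by_cases h2 : i = κ'
      · subst h2; simp [wzeta, Finsupp.single_apply, h1, Ne.symm h1, hne]
      · simp [wzeta, Finsupp.single_apply, h1, h2]
  · simp [wzeta, Finsupp.single_apply]

lemma expMap_wzeta_other (κ κ' i : Fin n) (h1 : i ≠ κ) (h2 : i ≠ κ') (w : (Fin n ⊕ Bool) →₀ ℕ) :
    expMap (wzeta κ κ') w (Sum.inl i) = w (Sum.inl i) := by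
  rw [expMap_apply']
  apply sum_delta1 w (Sum.inl i)
  intro v
  rcases v with j | b
  · by_cases hj1 : j = κ
    · subst hj1; simp [wzeta, Finsupp.single_apply, Ne.symm h1, h1]
    · by_cases hj2 : j = κ'
      · subst hj2; simp [wzeta, Finsupp.single_apply, Ne.symm h1, Ne.symm h2, hj1]
      · simp [wzeta, Finsupp.single_apply, hj1, hj2]
  · simp [wzeta, Finsupp.single_apply]

lemma expMap_wzeta_s (κ κ' : Fin n) (hne : κ ≠ κ') (w : (Fin n ⊕ Bool) →₀ ℕ) :
    expMap (wzeta κ κ') w (Sum.inr false) = w (Sum.inr false) + w (Sum.inl κ) := by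
  rw [expMap_apply']
  apply sum_delta2 w (Sum.inr false) (Sum.inl κ)
  intro v
  rcases v with i | b
  · by_cases h1 : i = κ
    · subst h1; simp [wzeta, Finsupp.single_apply]
    · by_cases h2 : i = κ'
      · subst h2; simp [wzeta, Finsupp.single_apply, h1, Ne.symm h1]
      · simp [wzeta, Finsupp.single_apply, h1, h2]
  · rcases b with _ | _ <;> simp [wzeta, Finsupp.single_apply]

lemma expMap_wzeta_t (κ κ' : Fin n) (hne : κ ≠ κ') (w : (Fin n ⊕ Bool) →₀ ℕ) :
    expMap (wzeta κ κ') w (Sum.inr true) = w (Sum.inr true) + w (Sum.inl κ') := by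
  rw [expMap_apply']
  apply sum_delta2 w (Sum.inr true) (Sum.inl κ')
  intro v
  rcases v with i | b
  · by_cases h1 : i = κ
    · subst h1; simp [wzeta, Finsupp.single_apply, hne, Ne.symm hne]
    · by_cases h2 : i = κ'
      · subst h2; simp [wzeta, Finsupp.single_apply, h1]
      · simp [wzeta, Finsupp.single_apply, h1, h2]
  · rcases b with _ | _ <;> simp [wzeta, Finsupp.single_apply]

end WzetaSlots


section SegBlock
variable {K : Type*} [Field K] {n : ℕ}

/-- extracting two variables from a monomial -/
lemma double_extract {α : Type*} (m : α →₀ ℕ) (a b : α) (hab : a ≠ b)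
    (ha : m a ≠ 0) (hb : m b ≠ 0) :
    ∃ m₂ : α →₀ ℕ, m = m₂ + Finsupp.single a 1 + Finsupp.single b 1 := by
  refine ⟨m - Finsupp.single a 1 - Finsupp.single b 1, ?_⟩
  ext v
  simp only [Finsupp.add_apply, Finsupp.tsub_apply, Finsupp.single_apply]
  by_cases h1 : a = v
  · have h2 : ¬ b = v := fun h => hab (h1.trans h.symm)
    subst h1
    simp only [eq_self_iff_true, if_true, if_neg h2]
    omega
  · by_cases h2 : b = v
    · subst h2
      simp only [eq_self_iff_true, if_true, if_neg h1]
      omega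
    · simp [h1, h2]

/-- the straightening measure -/
noncomputable def segMu (m : (Fin n ⊕ Fin n ⊕ Unit) →₀ ℕ) : ℕ :=
  ∑ i : Fin n, i.val * m (Sum.inl i)

lemma segMu_add (p q : (Fin n ⊕ Fin n ⊕ Unit) →₀ ℕ) : segMu (p + q) = segMu p + segMu q := by
  simp [segMu, Finsupp.add_apply, mul_add, Finset.sum_add_distrib]

lemma segMu_single_x (j : Fin n) : segMu (Finsupp.single (Sum.inl j : Fin n ⊕ Fin n ⊕ Unit) 1) = j.val := by
  unfold segMu
  have : ∀ i : Fin n, i.val * (Finsupp.single (Sum.inl j : Fin n ⊕ Fin n ⊕ Unit) 1) (Sum.inl i)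
      = if j = i then j.val else 0 := by
    intro i
    by_cases h : j = i
    · subst h; simp [Finsupp.single_apply]
    · simp [Finsupp.single_apply, h]
  rw [Finset.sum_congr rfl fun i _ => this i, Finset.sum_ite_eq Finset.univ j fun i => (j:ℕ)]
  simp

lemma segMu_single_yz (v : Fin n ⊕ Unit) : segMu (Finsupp.single (Sum.inr v : Fin n ⊕ Fin n ⊕ Unit) 1) = 0 := by
  unfold segMu
  apply Finset.sum_eq_zero
  intro i _
  simp [Finsupp.single_apply]

/-- the normal (straightened) monomials for the Segre relations -/
def segNormal (m : (Fin n ⊕ Fin n ⊕ Unit) →₀ ℕ) : Prop :=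
  (∀ i j : Fin n, i < j → m (Sum.inl j) = 0 ∨ m (Sum.inr (Sum.inl i)) = 0) ∧
    m (Sum.inr (Sum.inr ())) = 0

/-- spanning: every z-free monomial is a minor-combination plus normal monomials -/
lemma seg_span : ∀ (N : ℕ) (m : (Fin n ⊕ Fin n ⊕ Unit) →₀ ℕ), segMu m ≤ N →
    m (Sum.inr (Sum.inr ())) = 0 →
    (monomial m (1:K)) ∈ (Ideal.span (MGset K n)).restrictScalars K ⊔
      Submodule.span K {p | ∃ m', segNormal m' ∧ p = monomial m' (1:K)} := by
  intro N
  induction N using Nat.strong_induction_on with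
  | _ N ih =>
    intro m hmu hz
    by_cases hsort : ∀ i j : Fin n, i < j → m (Sum.inl j) = 0 ∨ m (Sum.inr (Sum.inl i)) = 0
    · exact Submodule.mem_sup_right (Submodule.subset_span ⟨m, ⟨hsort, hz⟩, rfl⟩)
    · push_neg at hsort
      obtain ⟨i, j, hij, hxj, hyi⟩ := hsort
      obtain ⟨m₂, heq⟩ := double_extract m (Sum.inl j) (Sum.inr (Sum.inl i)) (by simp) hxj hyi
      set m' := m₂ + Finsupp.single (Sum.inl i : Fin n ⊕ Fin n ⊕ Unit) 1
        + Finsupp.single (Sum.inr (Sum.inl j) : Fin n ⊕ Fin n ⊕ Unit) 1 with hm'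
      have h1 : monomial m₂ (1:K) * (X (Sum.inl j) * X (Sum.inr (Sum.inl i))) = monomial m 1 := by
        rw [X_mul_X_eq, monomial_mul, one_mul, ← add_assoc, ← heq]
      have h2 : monomial m₂ (1:K) * (X (Sum.inl i) * X (Sum.inr (Sum.inl j))) = monomial m' 1 := by
        rw [X_mul_X_eq, monomial_mul, one_mul, ← add_assoc]
      have hid : monomial m (1:K) = monomial m₂ 1 * mgen K i j + monomial m' 1 := by
        rw [mgen, mul_sub, h1, h2]; ring
      have hzm2 : m₂ (Sum.inr (Sum.inr ())) = 0 := by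
        have h := congrArg (fun f : (Fin n ⊕ Fin n ⊕ Unit) →₀ ℕ => f (Sum.inr (Sum.inr ()))) heq
        simp only [Finsupp.add_apply, Finsupp.single_apply] at h
        rw [hz] at h
        simp at h
        omega
      have hmuval : segMu m = segMu m₂ + j.val := by
        rw [heq, segMu_add, segMu_add, segMu_single_x, segMu_single_yz, add_zero]
      have hmuval' : segMu m' = segMu m₂ + i.val := by
        rw [hm', segMu_add, segMu_add, segMu_single_x, segMu_single_yz, add_zero]
      have hzm' : m' (Sum.inr (Sum.inr ())) = 0 := by
        simp [hm', Finsupp.add_apply, Finsupp.single_apply, hzm2]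
      have hlt : segMu m' < N := by
        have : segMu m' < segMu m := by
          rw [hmuval, hmuval']
          have : i.val < j.val := hij
          omega
        omega
      rw [hid]
      apply Submodule.add_mem
      · apply Submodule.mem_sup_left
        show monomial m₂ 1 * mgen K i j ∈ Ideal.span (MGset K n)
        exact Ideal.mul_mem_left _ _ (Ideal.subset_span ⟨i, j, rfl⟩)
      · exact ih (segMu m') hlt m' le_rfl hzm'

/-- injectivity auxiliary -/
lemma seg_inj_aux (m m' : (Fin n ⊕ Fin n ⊕ Unit) →₀ ℕ)
    (hm : ∀ i j : Fin n, i < j → m (Sum.inl j) = 0 ∨ m (Sum.inr (Sum.inl i)) = 0)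
    (hc : ∀ i : Fin n, m (Sum.inl i) + m (Sum.inr (Sum.inl i))
        = m' (Sum.inl i) + m' (Sum.inr (Sum.inl i)))
    (hs : (∑ j : Fin n, m (Sum.inl j)) = ∑ j : Fin n, m' (Sum.inl j))
    (i₀ : Fin n) (hmin : ∀ j : Fin n, j < i₀ → m (Sum.inl j) = m' (Sum.inl j))
    (hlt : m (Sum.inl i₀) < m' (Sum.inl i₀)) : False := by
  have hb : m (Sum.inr (Sum.inl i₀)) ≠ 0 := by
    have := hc i₀; omega
  have hzero : ∀ j : Fin n, i₀ < j → m (Sum.inl j) = 0 := by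
    intro j hj
    rcases hm i₀ j hj with h | h
    · exact h
    · exact absurd h hb
  have h1 : (∑ j : Fin n, m (Sum.inl j))
      = (∑ j ∈ Finset.univ.filter (fun j : Fin n => j < i₀), m (Sum.inl j)) + m (Sum.inl i₀) := by
    rw [← Finset.sum_filter_add_sum_filter_not Finset.univ (fun j : Fin n => j < i₀)]
    congr 1
    apply Finset.sum_eq_single_of_mem i₀ (by simp)
    intro j hj hne
    have : i₀ < j := by
      simp only [Finset.mem_filter] at hj
      rcases lt_or_eq_of_le (not_lt.mp hj.2) with h | h
      · exact h
      · exact absurd h.symm hne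
    exact hzero j this
  have h2 : (∑ j ∈ Finset.univ.filter (fun j : Fin n => j < i₀), m' (Sum.inl j))
      + m' (Sum.inl i₀) ≤ ∑ j : Fin n, m' (Sum.inl j) := by
    rw [← Finset.sum_filter_add_sum_filter_not Finset.univ (fun j : Fin n => j < i₀)]
    have : m' (Sum.inl i₀) ≤ ∑ j ∈ Finset.univ.filter (fun j : Fin n => ¬ j < i₀), m' (Sum.inl j) := by
      apply Finset.single_le_sum (f := fun j : Fin n => m' (Sum.inl j)) (fun _ _ => Nat.zero_le _)
      simp
    omega
  have h3 : (∑ j ∈ Finset.univ.filter (fun j : Fin n => j < i₀), m (Sum.inl j))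
      = ∑ j ∈ Finset.univ.filter (fun j : Fin n => j < i₀), m' (Sum.inl j) := by
    apply Finset.sum_congr rfl
    intro j hj
    simp only [Finset.mem_filter] at hj
    rw [hmin j hj.2]
  omega

/-- injectivity of the Segre image on normal monomials -/
lemma seg_inj (m m' : (Fin n ⊕ Fin n ⊕ Unit) →₀ ℕ) (hm : segNormal m) (hm' : segNormal m')
    (h : expMap (wphi n) m = expMap (wphi n) m') : m = m' := by
  have hc : ∀ i : Fin n, m (Sum.inl i) + m (Sum.inr (Sum.inl i))
      = m' (Sum.inl i) + m' (Sum.inr (Sum.inl i)) := by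
    intro i
    have := congrArg (fun f : (Fin n ⊕ Bool) →₀ ℕ => f (Sum.inl i)) h
    simpa [expMap_wphi_inl] using this
  have hs : (∑ j : Fin n, m (Sum.inl j)) = ∑ j : Fin n, m' (Sum.inl j) := by
    have := congrArg (fun f : (Fin n ⊕ Bool) →₀ ℕ => f (Sum.inr false)) h
    simpa [expMap_wphi_s] using this
  have hxeq : ∀ i : Fin n, m (Sum.inl i) = m' (Sum.inl i) := by
    by_contra hcon
    push_neg at hcon
    obtain ⟨i₁, hi₁⟩ := hcon
    have hDne : (Finset.univ.filter (fun i : Fin n => m (Sum.inl i) ≠ m' (Sum.inl i))).Nonempty :=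
      ⟨i₁, by simp [hi₁]⟩
    set D := Finset.univ.filter (fun i : Fin n => m (Sum.inl i) ≠ m' (Sum.inl i)) with hD
    set i₀ := D.min' hDne with hi₀
    have hi₀mem : i₀ ∈ D := D.min'_mem hDne
    have hi₀ne : m (Sum.inl i₀) ≠ m' (Sum.inl i₀) := by
      have := hi₀mem
      rw [hD] at this
      simpa using this
    have hmin : ∀ j : Fin n, j < i₀ → m (Sum.inl j) = m' (Sum.inl j) := by
      intro j hj
      by_contra hne
      have : j ∈ D := by simp [hD, hne]
      have := D.min'_le j this
      omega
    rcases lt_or_gt_of_ne hi₀ne with hlt | hgt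
    · exact seg_inj_aux m m' hm.1 hc hs i₀ hmin hlt
    · exact seg_inj_aux m' m hm'.1 (fun i => (hc i).symm) hs.symm i₀
        (fun j hj => (hmin j hj).symm) hgt
  ext v
  rcases v with i | i | u
  · exact hxeq i
  · have := hc i
    have := hxeq i
    omega
  · rw [hm.2, hm'.2]

end SegBlock


section KerBlock
variable {K : Type*} [Field K] {n : ℕ}

lemma span_monomials_support {τ : Type*} (Pr : (τ →₀ ℕ) → Prop) (v : MvPolynomial τ K)
    (hv : v ∈ Submodule.span K {p | ∃ m, Pr m ∧ p = monomial m (1:K)}) :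
    ∀ m ∈ v.support, Pr m := by
  refine Submodule.span_induction ?_ ?_ ?_ ?_ hv
  · rintro p ⟨m, hm, rfl⟩ m' hm'
    have := MvPolynomial.support_monomial (s := m) (a := (1:K))
    rw [if_neg one_ne_zero] at this
    rw [this] at hm'
    rw [Finset.mem_singleton.mp hm']
    exact hm
  · intro m hm; simp at hm
  · intro p q _ _ hp hq m hm
    have := MvPolynomial.support_add (p := p) (q := q) hm
    rcases Finset.mem_union.mp this with h | h
    · exact hp m h
    · exact hq m h
  · intro c p _ hp m hm
    exact hp m (MvPolynomial.support_smul hm)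

/-- kernel elements supported on an injectively-mapped family are zero -/
lemma eq_zero_of_inj_image {τ γ : Type*} (F : MvPolynomial τ K →ₐ[K] MvPolynomial γ K)
    (img : (τ →₀ ℕ) → (γ →₀ ℕ)) (Pr : (τ →₀ ℕ) → Prop)
    (himg : ∀ m, Pr m → ∀ c : K, F (monomial m c) = monomial (img m) c)
    (hinj : ∀ m m', Pr m → Pr m' → img m = img m' → m = m')
    (v : MvPolynomial τ K) (hsupp : ∀ m ∈ v.support, Pr m) (hF : F v = 0) : v = 0 := by
  by_contra h0
  obtain ⟨m₀, hm₀⟩ := Finset.nonempty_iff_ne_empty.mpr (mt MvPolynomial.support_eq_empty.mp h0)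
  have hsum : F v = ∑ m ∈ v.support, F (monomial m (coeff m v)) := by
    conv_lhs => rw [← support_sum_monomial_coeff v]
    rw [map_sum]
  have hco : coeff (img m₀) (F v) = coeff m₀ v := by
    rw [hsum, coeff_sum, Finset.sum_eq_single m₀]
    · rw [himg m₀ (hsupp m₀ hm₀), coeff_monomial, if_pos rfl]
    · intro m hm hne
      rw [himg m (hsupp m hm), coeff_monomial, if_neg]
      intro hc
      exact hne (hinj m m₀ (hsupp m hm) (hsupp m₀ hm₀) hc)
    · intro h; exact absurd hm₀ h
  rw [hF, coeff_zero] at hco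
  exact Finsupp.mem_support_iff.mp hm₀ hco.symm

lemma phi0_mgen (i j : Fin n) : phi0 K n (mgen K i j) = 0 := by
  unfold phi0 mgen
  simp only [map_sub, map_mul, aeval_X]
  ring

/-- the Segre kernel lemma: z-free kernel elements lie in the span of the minors -/
lemma seg_ker {g : MvPolynomial (Fin n ⊕ Fin n ⊕ Unit) K}
    (hzf : ∀ m ∈ g.support, m (Sum.inr (Sum.inr ())) = 0)
    (hker : phi0 K n g = 0) : g ∈ Ideal.span (MGset K n) := by
  have hmem : g ∈ (Ideal.span (MGset K n)).restrictScalars K ⊔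
      Submodule.span K {p | ∃ m', segNormal m' ∧ p = monomial m' (1:K)} := by
    have hg : g = ∑ m ∈ g.support, monomial m (coeff m g) := (support_sum_monomial_coeff g).symm
    rw [hg]
    apply Submodule.sum_mem
    intro m hm
    have : (monomial m) (coeff m g) = (coeff m g) • monomial m (1:K) := by
      rw [smul_monomial, smul_eq_mul, mul_one]
    rw [this]
    exact Submodule.smul_mem _ _ (seg_span (segMu m) m le_rfl (hzf m hm))
  obtain ⟨u, hu, v, hv, huv⟩ := Submodule.mem_sup.mp hmem
  have hphiu : phi0 K n u = 0 := by
    have hle : Ideal.span (MGset K n) ≤ RingHom.ker (phi0 K n).toRingHom := by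
      rw [Ideal.span_le]
      rintro f ⟨i, j, rfl⟩
      exact phi0_mgen i j
    exact hle hu
  have hphiv : phi0 K n v = 0 := by
    have : phi0 K n (u + v) = 0 := by rw [huv]; exact hker
    rw [map_add, hphiu, zero_add] at this
    exact this
  have hvsupp : ∀ m ∈ v.support, segNormal m := span_monomials_support segNormal v hv
  have hv0 : v = 0 := by
    apply eq_zero_of_inj_image (phi0 K n) (expMap (wphi n)) segNormal ?_ seg_inj v hvsupp hphiv
    intro m hm c
    exact phi0_monomial m c hm.2
  rw [← huv, hv0, add_zero]
  exact hu

end KerBlock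


section ZetaBlock
variable {K : Type*} [Field K] {n : ℕ}

/-- normal monomials for the `zeta` rewriting -/
def zNormal (κ : Fin n) (w : (Fin n ⊕ Bool) →₀ ℕ) : Prop :=
  w (Sum.inr true) = 0 ∨ w (Sum.inl κ) = 0

lemma zeta_span (κ κ' : Fin n) (hne : κ ≠ κ') :
    ∀ (N : ℕ) (w : (Fin n ⊕ Bool) →₀ ℕ), w (Sum.inl κ) ≤ N →
    (monomial w (1:K)) ∈ (Ideal.span {f0 K κ κ'}).restrictScalars K ⊔
      Submodule.span K {p | ∃ w', zNormal κ w' ∧ p = monomial w' (1:K)} := by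
  intro N
  induction N using Nat.strong_induction_on with
  | _ N ih =>
    intro w hmu
    by_cases hnorm : zNormal κ w
    · exact Submodule.mem_sup_right (Submodule.subset_span ⟨w, hnorm, rfl⟩)
    · rw [zNormal] at hnorm
      push_neg at hnorm
      obtain ⟨ht, hκ⟩ := hnorm
      obtain ⟨w₂, heq⟩ := double_extract w (Sum.inr true) (Sum.inl κ) (by simp) ht hκ
      set w' := w₂ + Finsupp.single (Sum.inr false : Fin n ⊕ Bool) 1
        + Finsupp.single (Sum.inl κ' : Fin n ⊕ Bool) 1 with hw'
      have h1 : monomial w₂ (1:K) * (X (Sum.inr true) * X (Sum.inl κ)) = monomial w 1 := by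
        rw [X_mul_X_eq, monomial_mul, one_mul, ← add_assoc, ← heq]
      have h2 : monomial w₂ (1:K) * (X (Sum.inr false) * X (Sum.inl κ')) = monomial w' 1 := by
        rw [X_mul_X_eq, monomial_mul, one_mul, ← add_assoc]
      have hid : monomial w (1:K) = monomial w₂ 1 * f0 K κ κ' + monomial w' 1 := by
        rw [f0, mul_sub, h1, h2]; ring
      have hwκ : w (Sum.inl κ) = w₂ (Sum.inl κ) + 1 := by
        have h := congrArg (fun f : (Fin n ⊕ Bool) →₀ ℕ => f (Sum.inl κ)) heq
        simp only [Finsupp.add_apply, Finsupp.single_apply] at h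
        simp at h
        omega
      have hw'κ : w' (Sum.inl κ) = w₂ (Sum.inl κ) := by
        simp only [hw', Finsupp.add_apply, Finsupp.single_apply]
        rw [if_neg (by simp), if_neg (by simp [Ne.symm hne])]
        omega
      have hlt : w' (Sum.inl κ) < N := by omega
      rw [hid]
      apply Submodule.add_mem
      · apply Submodule.mem_sup_left
        show monomial w₂ 1 * f0 K κ κ' ∈ Ideal.span {f0 K κ κ'}
        exact Ideal.mul_mem_left _ _ (Ideal.subset_span rfl)
      · exact ih (w' (Sum.inl κ)) hlt w' le_rfl

lemma zeta_inj (κ κ' : Fin n) (hne : κ ≠ κ') (w w' : (Fin n ⊕ Bool) →₀ ℕ)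
    (hw : zNormal κ w) (hw' : zNormal κ w')
    (h : expMap (wzeta κ κ') w = expMap (wzeta κ κ') w') : w = w' := by
  have eqA : w (Sum.inl κ) + w (Sum.inl κ') = w' (Sum.inl κ) + w' (Sum.inl κ') := by
    have := congrArg (fun f : (Fin n ⊕ Bool) →₀ ℕ => f (Sum.inl κ)) h
    simpa [expMap_wzeta_u κ κ' hne] using this
  have eqB : w (Sum.inr false) + w (Sum.inl κ) = w' (Sum.inr false) + w' (Sum.inl κ) := by
    have := congrArg (fun f : (Fin n ⊕ Bool) →₀ ℕ => f (Sum.inr false)) h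
    simpa [expMap_wzeta_s κ κ' hne] using this
  have eqC : w (Sum.inr true) + w (Sum.inl κ') = w' (Sum.inr true) + w' (Sum.inl κ') := by
    have := congrArg (fun f : (Fin n ⊕ Bool) →₀ ℕ => f (Sum.inr true)) h
    simpa [expMap_wzeta_t κ κ' hne] using this
  rw [zNormal] at hw hw'
  ext v
  rcases v with i | b
  · by_cases h1 : i = κ
    · subst h1; rcases hw with h | h <;> rcases hw' with h' | h' <;> omega
    · by_cases h2 : i = κ'
      · subst h2; rcases hw with h | h <;> rcases hw' with h' | h' <;> omega
      · have := congrArg (fun f : (Fin n ⊕ Bool) →₀ ℕ => f (Sum.inl i)) h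
        simpa [expMap_wzeta_other κ κ' i h1 h2] using this
  · rcases b with _ | _
    · rcases hw with h | h <;> rcases hw' with h' | h' <;> omega
    · rcases hw with h | h <;> rcases hw' with h' | h' <;> omega

lemma zeta_f0 (κ κ' : Fin n) (hne : κ ≠ κ') : zeta K κ κ' (f0 K κ κ') = 0 := by
  unfold zeta f0
  have h' : ¬ (κ' = κ) := Ne.symm hne
  simp only [map_sub, map_mul, aeval_X, h', if_true, if_false, eq_self_iff_true, ite_true, ite_false]
  ring

lemma zeta_ker (κ κ' : Fin n) (hne : κ ≠ κ') {q : MvPolynomial (Fin n ⊕ Bool) K}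
    (hq : zeta K κ κ' q = 0) : q ∈ Ideal.span {f0 K κ κ'} := by
  have hmem : q ∈ (Ideal.span {f0 K κ κ'}).restrictScalars K ⊔
      Submodule.span K {p | ∃ w', zNormal κ w' ∧ p = monomial w' (1:K)} := by
    have hg : q = ∑ w ∈ q.support, monomial w (coeff w q) := (support_sum_monomial_coeff q).symm
    rw [hg]
    apply Submodule.sum_mem
    intro w hw
    have : (monomial w) (coeff w q) = (coeff w q) • monomial w (1:K) := by
      rw [smul_monomial, smul_eq_mul, mul_one]
    rw [this]
    exact Submodule.smul_mem _ _ (zeta_span κ κ' hne (w (Sum.inl κ)) w le_rfl)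
  obtain ⟨u, hu, v, hv, huv⟩ := Submodule.mem_sup.mp hmem
  have hzu : zeta K κ κ' u = 0 := by
    have hle : Ideal.span {f0 K κ κ'} ≤ RingHom.ker (zeta K κ κ').toRingHom := by
      rw [Ideal.span_le]
      rintro f rfl
      exact zeta_f0 κ κ' hne
    exact hle hu
  have hzv : zeta K κ κ' v = 0 := by
    have : zeta K κ κ' (u + v) = 0 := by rw [huv]; exact hq
    rw [map_add, hzu, zero_add] at this
    exact this
  have hvsupp : ∀ w ∈ v.support, zNormal κ w := span_monomials_support (zNormal κ) v hv
  have hv0 : v = 0 := by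
    apply eq_zero_of_inj_image (zeta K κ κ') (expMap (wzeta κ κ')) (zNormal κ) ?_
      (zeta_inj κ κ' hne) v hvsupp hzv
    intro w _ c
    exact zeta_monomial κ κ' w c
  rw [← huv, hv0, add_zero]
  exact hu

end ZetaBlock


section BalBlock
variable {K : Type*} [Field K] {n : ℕ}

lemma expMap_add {α τ : Type*} (w : α → (τ →₀ ℕ)) (m1 m2 : α →₀ ℕ) :
    expMap w (m1 + m2) = expMap w m1 + expMap w m2 := by
  unfold expMap
  apply Finsupp.sum_add_index' <;> intros <;> simp [add_smul]

lemma expMap_single {α τ : Type*} (w : α → (τ →₀ ℕ)) (v : α) (e : ℕ) :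
    expMap w (Finsupp.single v e) = e • w v := by
  unfold expMap
  exact Finsupp.sum_single_index (by simp)

lemma expMap_zero {α τ : Type*} (w : α → (τ →₀ ℕ)) : expMap w 0 = 0 := by
  unfold expMap
  exact Finsupp.sum_zero_index

/-- the integer balance degree on exponents of `P` -/
noncomputable def ibal (w : (Fin n ⊕ Bool) →₀ ℕ) : ℤ :=
  ((w (Sum.inr false) : ℤ) + (w (Sum.inr true) : ℤ)) - ∑ i : Fin n, (w (Sum.inl i) : ℤ)

lemma ibal_add (w1 w2 : (Fin n ⊕ Bool) →₀ ℕ) : ibal (w1 + w2) = ibal w1 + ibal w2 := by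
  simp only [ibal, Finsupp.add_apply, Nat.cast_add, Finset.sum_add_distrib]
  ring

lemma expMap_wphi_bal (m : (Fin n ⊕ Fin n ⊕ Unit) →₀ ℕ) : ibal (expMap (wphi n) m) = 0 := by
  unfold ibal
  rw [expMap_wphi_s, expMap_wphi_t]
  have : ∀ i : Fin n, (expMap (wphi n) m (Sum.inl i) : ℤ)
      = (m (Sum.inl i) : ℤ) + (m (Sum.inr (Sum.inl i)) : ℤ) := by
    intro i; rw [expMap_wphi_inl]; push_cast; ring
  rw [Finset.sum_congr rfl fun i _ => this i]
  rw [Finset.sum_add_distrib]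
  push_cast
  ring

lemma phi0_support_bal (g : MvPolynomial (Fin n ⊕ Fin n ⊕ Unit) K) :
    ∀ w ∈ (phi0 K n g).support, ibal w = 0 := by
  intro w hw
  have hsum : phi0 K n g = ∑ m ∈ g.support, phi0 K n (monomial m (coeff m g)) := by
    conv_lhs => rw [← support_sum_monomial_coeff g]
    rw [map_sum]
  rw [hsum] at hw
  have := MvPolynomial.support_sum hw
  obtain ⟨m, _, hw2⟩ := Finset.mem_biUnion.mp this
  by_cases hz : m (Sum.inr (Sum.inr ())) = 0
  · rw [phi0_monomial m _ hz] at hw2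
    have hsm := MvPolynomial.support_monomial (s := expMap (wphi n) m) (a := coeff m g)
      (h := by infer_instance)
    rw [hsm] at hw2
    by_cases hc : coeff m g = 0
    · rw [if_pos hc] at hw2; simp at hw2
    · rw [if_neg hc] at hw2
      rw [Finset.mem_singleton.mp hw2]
      exact expMap_wphi_bal m
  · rw [phi0_monomial_zero m _ hz] at hw2
    simp at hw2

lemma eq_of_mem_support_monomial {τ : Type*} {m w : τ →₀ ℕ} {c : K}
    (h : w ∈ (monomial m c : MvPolynomial τ K).support) : m = w := by
  have h' : coeff w (monomial m c) ≠ 0 := MvPolynomial.mem_support_iff.mp h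
  rw [coeff_monomial] at h'
  by_contra hne
  rw [if_neg hne] at h'
  exact h' rfl

lemma f0_support_bal (κ κ' : Fin n) : ∀ w ∈ (f0 K κ κ').support, ibal w = 0 := by
  intro w hw
  have h1 : (f0 K κ κ') = monomial (Finsupp.single (Sum.inr true : Fin n ⊕ Bool) 1
      + Finsupp.single (Sum.inl κ) 1) 1
      - monomial (Finsupp.single (Sum.inr false : Fin n ⊕ Bool) 1
      + Finsupp.single (Sum.inl κ') 1) 1 := by
    rw [f0, X_mul_X_eq, X_mul_X_eq]
  rw [h1] at hw
  have := Finsupp.support_sub hw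
  have hbal : ∀ (b : Bool) (i : Fin n),
      ibal (Finsupp.single (Sum.inr b : Fin n ⊕ Bool) 1 + Finsupp.single (Sum.inl i) 1) = 0 := by
    intro b i
    rw [ibal_add]
    unfold ibal
    rcases b with _ | _ <;> simp [Finsupp.single_apply, Finset.sum_ite_eq]
  rcases Finset.mem_union.mp this with h | h
  · rw [← eq_of_mem_support_monomial h]
    exact hbal true κ
  · rw [← eq_of_mem_support_monomial h]
    exact hbal false κ'

lemma f0_ne_zero (κ κ' : Fin n) : (f0 K κ κ') ≠ 0 := by
  intro h
  have h1 : (f0 K κ κ') = monomial (Finsupp.single (Sum.inr true : Fin n ⊕ Bool) 1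
      + Finsupp.single (Sum.inl κ) 1) 1
      - monomial (Finsupp.single (Sum.inr false : Fin n ⊕ Bool) 1
      + Finsupp.single (Sum.inl κ') 1) 1 := by
    rw [f0, X_mul_X_eq, X_mul_X_eq]
  have hco := congrArg (coeff (Finsupp.single (Sum.inr true : Fin n ⊕ Bool) 1
      + Finsupp.single (Sum.inl κ) 1)) (h1.symm.trans h)
  rw [coeff_sub, coeff_monomial, coeff_monomial, if_pos rfl, if_neg, coeff_zero] at hco
  · simpa using hco
  · intro hc
    have := congrArg (fun f : (Fin n ⊕ Bool) →₀ ℕ => f (Sum.inr true)) hc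
    simp [Finsupp.single_apply] at this

/-- division by the balanced `f0` preserves balancedness -/
lemma bal_factor (κ κ' : Fin n) {p q : MvPolynomial (Fin n ⊕ Bool) K}
    (heq : f0 K κ κ' * p = q) (hq : ∀ w ∈ q.support, ibal w = 0) :
    ∀ w ∈ p.support, ibal w = 0 := by
  classical
  set p0 : MvPolynomial (Fin n ⊕ Bool) K :=
    ∑ w ∈ p.support.filter (fun w => ibal w = 0), monomial w (coeff w p) with hp0
  set p1 : MvPolynomial (Fin n ⊕ Bool) K :=
    ∑ w ∈ p.support.filter (fun w => ¬ ibal w = 0), monomial w (coeff w p) with hp1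
  have hsplit : p = p0 + p1 := by
    rw [hp0, hp1, Finset.sum_filter_add_sum_filter_not]
    exact (support_sum_monomial_coeff p).symm
  have hsupp_mono : ∀ (s : Finset ((Fin n ⊕ Bool) →₀ ℕ)) (f : _ → K) (Pr : _ → Prop),
      (∀ w ∈ s, Pr w) → ∀ w ∈ (∑ w ∈ s, monomial w (f w)).support, Pr w := by
    intro s f Pr hs w hw
    have := MvPolynomial.support_sum hw
    obtain ⟨m, hm, hw2⟩ := Finset.mem_biUnion.mp this
    have hsm := MvPolynomial.support_monomial (s := m) (a := f m) (h := by infer_instance)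
    rw [hsm] at hw2
    by_cases hc : f m = 0
    · rw [if_pos hc] at hw2; simp at hw2
    · rw [if_neg hc] at hw2
      rw [Finset.mem_singleton.mp hw2]
      exact hs m hm
  have hp0bal : ∀ w ∈ p0.support, ibal w = 0 := by
    apply hsupp_mono
    intro w hw
    exact (Finset.mem_filter.mp hw).2
  have hp1bal : ∀ w ∈ p1.support, ibal w ≠ 0 := by
    apply hsupp_mono
    intro w hw
    exact (Finset.mem_filter.mp hw).2
  have hprod : f0 K κ κ' * p1 = q - f0 K κ κ' * p0 := by
    rw [← heq, hsplit]; ring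
  have hsub1 : ∀ w ∈ (f0 K κ κ' * p1).support, ibal w ≠ 0 := by
    intro w hw
    have := MvPolynomial.support_mul _ _ hw
    obtain ⟨a, ha, b, hb, hab⟩ := Finset.mem_add.mp this
    rw [← hab, ibal_add, f0_support_bal κ κ' a ha, zero_add]
    exact hp1bal b hb
  have hsub2 : ∀ w ∈ (f0 K κ κ' * p1).support, ibal w = 0 := by
    intro w hw
    rw [hprod] at hw
    have := Finsupp.support_sub hw
    rcases Finset.mem_union.mp this with h | h
    · exact hq w h
    · have := MvPolynomial.support_mul _ _ h
      obtain ⟨a, ha, b, hb, hab⟩ := Finset.mem_add.mp this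
      rw [← hab, ibal_add, f0_support_bal κ κ' a ha, zero_add]
      exact hp0bal b hb
  have hzero : f0 K κ κ' * p1 = 0 := by
    by_contra hne
    obtain ⟨w, hw⟩ := Finset.nonempty_iff_ne_empty.mpr (mt MvPolynomial.support_eq_empty.mp hne)
    exact (hsub1 w hw) (hsub2 w hw)
  have hp1zero : p1 = 0 := by
    rcases mul_eq_zero.mp hzero with h | h
    · exact absurd h (f0_ne_zero κ κ')
    · exact h
  intro w hw
  have : p = p0 := by rw [hsplit, hp1zero, add_zero]
  rw [this] at hw
  exact hp0bal w hw

/-- lifting balanced monomials through `phi0` -/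
lemma bal_lift_mono : ∀ (N : ℕ) (w : (Fin n ⊕ Bool) →₀ ℕ),
    w (Sum.inr false) + w (Sum.inr true) ≤ N → ibal w = 0 →
    ∃ m : (Fin n ⊕ Fin n ⊕ Unit) →₀ ℕ, m (Sum.inr (Sum.inr ())) = 0 ∧ expMap (wphi n) m = w := by
  intro N
  induction N using Nat.strong_induction_on with
  | _ N ih =>
    intro w hN hbal
    by_cases h0 : w (Sum.inr false) + w (Sum.inr true) = 0
    · have hsum : (∑ i : Fin n, (w (Sum.inl i) : ℤ)) = 0 := by
        unfold ibal at hbal; omega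
      have hallz : ∀ i : Fin n, w (Sum.inl i) = 0 := by
        intro i
        have hnn : ∀ j ∈ Finset.univ, (0:ℤ) ≤ (w (Sum.inl j) : ℤ) := fun j _ => Int.ofNat_nonneg _
        have := (Finset.sum_eq_zero_iff_of_nonneg hnn).mp hsum i (Finset.mem_univ i)
        omega
      refine ⟨0, by simp, ?_⟩
      rw [expMap_zero]
      ext v
      rcases v with i | b
      · rw [hallz i]; rfl
      · rcases b with _ | _ <;> simp <;> omega
    · have hpos : 0 < w (Sum.inr false) + w (Sum.inr true) := Nat.pos_of_ne_zero h0
      have hsuminl : (∑ i : Fin n, (w (Sum.inl i) : ℤ)) ≠ 0 := by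
        unfold ibal at hbal; omega
      have : ∃ i : Fin n, w (Sum.inl i) ≠ 0 := by
        by_contra hc
        push_neg at hc
        apply hsuminl
        apply Finset.sum_eq_zero
        intro i _
        rw [hc i]; rfl
      obtain ⟨i, hi⟩ := this
      have : ∃ b : Bool, w (Sum.inr b) ≠ 0 := by
        by_contra hc
        push_neg at hc
        rw [hc false, hc true] at hpos
        simp at hpos
      obtain ⟨b, hb⟩ := this
      obtain ⟨w₂, heq⟩ := double_extract w (Sum.inr b) (Sum.inl i) (by simp) hb hi
      have hbal₂ : ibal w₂ = 0 := by
        have h := congrArg ibal heq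
        rw [ibal_add, ibal_add] at h
        have h1 : ibal (Finsupp.single (Sum.inr b : Fin n ⊕ Bool) 1) = 1 := by
          rcases b with _ | _ <;> simp [ibal, Finsupp.single_apply]
        have h2 : ibal (Finsupp.single (Sum.inl i : Fin n ⊕ Bool) 1) = -1 := by
          simp [ibal, Finsupp.single_apply, Finset.sum_ite_eq]
        rw [h1, h2, hbal] at h
        omega
      have hval : ∀ b' : Bool, w (Sum.inr b') = w₂ (Sum.inr b') + (if b = b' then 1 else 0) := by
        intro b'
        have h := congrArg (fun f : (Fin n ⊕ Bool) →₀ ℕ => f (Sum.inr b')) heq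
        simp only [Finsupp.add_apply, Finsupp.single_apply] at h
        rw [h]
        simp
      have hlt : w₂ (Sum.inr false) + w₂ (Sum.inr true) < N := by
        have hf := hval false
        have ht := hval true
        have hft : w (Sum.inr false) + w (Sum.inr true)
            = w₂ (Sum.inr false) + w₂ (Sum.inr true) + 1 := by
          rcases b with _ | _
          · rw [if_pos rfl] at hf
            rw [if_neg (by decide : ¬ (false = true))] at ht
            omega
          · rw [if_neg (by decide : ¬ (true = false))] at hf
            rw [if_pos rfl] at ht
            omega
        omega
      obtain ⟨m₂, hm₂z, hm₂⟩ := ih _ hlt w₂ le_rfl hbal₂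
      refine ⟨m₂ + Finsupp.single (if b then Sum.inr (Sum.inl i) else Sum.inl i) 1, ?_, ?_⟩
      · rcases b with _ | _ <;>
          simp [Finsupp.add_apply, Finsupp.single_apply, hm₂z]
      · rw [expMap_add, hm₂, expMap_single]
        rw [one_smul, heq, add_assoc]
        rcases b with _ | _
        · rfl
        · rfl

lemma bal_lift (p : MvPolynomial (Fin n ⊕ Bool) K) (hb : ∀ w ∈ p.support, ibal w = 0) :
    ∃ h : MvPolynomial (Fin n ⊕ Fin n ⊕ Unit) K,
      (∀ m ∈ h.support, m (Sum.inr (Sum.inr ())) = 0) ∧ phi0 K n h = p := by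
  classical
  have hex : ∀ w ∈ p.support, ∃ m : (Fin n ⊕ Fin n ⊕ Unit) →₀ ℕ,
      m (Sum.inr (Sum.inr ())) = 0 ∧ expMap (wphi n) m = w := by
    intro w hw
    exact bal_lift_mono (w (Sum.inr false) + w (Sum.inr true)) w le_rfl (hb w hw)
  choose mw hmwz hmw using hex
  refine ⟨∑ w ∈ p.support.attach, monomial (mw w.1 w.2) (coeff w.1 p), ?_, ?_⟩
  · intro m hm
    have := MvPolynomial.support_sum hm
    obtain ⟨a, _, hm2⟩ := Finset.mem_biUnion.mp this
    have hsm := MvPolynomial.support_monomial (s := mw a.1 a.2) (a := coeff a.1 p)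
      (h := by infer_instance)
    rw [hsm] at hm2
    by_cases hc : coeff a.1 p = 0
    · rw [if_pos hc] at hm2; simp at hm2
    · rw [if_neg hc] at hm2
      rw [Finset.mem_singleton.mp hm2]
      exact hmwz a.1 a.2
  · rw [map_sum]
    have hterm : ∀ a : {x // x ∈ p.support},
        phi0 K n (monomial (mw a.1 a.2) (coeff a.1 p)) = monomial a.1 (coeff a.1 p) := by
      intro a
      rw [phi0_monomial _ _ (hmwz a.1 a.2), hmw a.1 a.2]
    rw [Finset.sum_congr rfl fun a _ => hterm a]
    rw [Finset.sum_attach p.support (fun w => monomial w (coeff w p))]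
    exact support_sum_monomial_coeff p

end BalBlock


section CoreBlock
variable {K : Type*} [Field K] {n : ℕ}

lemma single_extract {α : Type*} (m : α →₀ ℕ) (a : α) (ha : m a ≠ 0) :
    ∃ m' : α →₀ ℕ, m = m' + Finsupp.single a 1 := by
  refine ⟨m - Finsupp.single a 1, ?_⟩
  ext v
  simp only [Finsupp.add_apply, Finsupp.tsub_apply, Finsupp.single_apply]
  by_cases h1 : a = v
  · subst h1
    simp only [eq_self_iff_true, if_true]
    omega
  · simp [h1]

lemma mem_support_X {τ : Type*} {v : τ} {m : τ →₀ ℕ}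
    (h : m ∈ (X v : MvPolynomial τ K).support) : m = Finsupp.single v 1 := by
  have hX : (X v : MvPolynomial τ K) = monomial (Finsupp.single v 1) 1 := rfl
  rw [hX] at h
  exact (eq_of_mem_support_monomial h).symm

lemma dgen_support_z (κ κ' : Fin n) :
    ∀ m ∈ (dgen K κ κ').support, m (Sum.inr (Sum.inr ())) = 0 := by
  intro m hm
  rw [dgen] at hm
  have := Finsupp.support_sub hm
  rcases Finset.mem_union.mp this with h | h
  · rw [mem_support_X h]
    simp [Finsupp.single_apply]
  · rw [mem_support_X h]
    simp [Finsupp.single_apply]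

lemma support_add_z {p q : MvPolynomial (Fin n ⊕ Fin n ⊕ Unit) K}
    (hp : ∀ m ∈ p.support, m (Sum.inr (Sum.inr ())) = 0)
    (hq : ∀ m ∈ q.support, m (Sum.inr (Sum.inr ())) = 0) :
    ∀ m ∈ (p + q).support, m (Sum.inr (Sum.inr ())) = 0 := by
  intro m hm
  have := Finsupp.support_add hm
  rcases Finset.mem_union.mp this with h | h
  · exact hp m h
  · exact hq m h

lemma support_mul_z {p q : MvPolynomial (Fin n ⊕ Fin n ⊕ Unit) K}
    (hp : ∀ m ∈ p.support, m (Sum.inr (Sum.inr ())) = 0)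
    (hq : ∀ m ∈ q.support, m (Sum.inr (Sum.inr ())) = 0) :
    ∀ m ∈ (p * q).support, m (Sum.inr (Sum.inr ())) = 0 := by
  intro m hm
  have := MvPolynomial.support_mul _ _ hm
  obtain ⟨a, ha, b, hb, hab⟩ := Finset.mem_add.mp this
  rw [← hab, Finsupp.add_apply, hp a ha, hq b hb]

lemma phi0_dgen (κ κ' : Fin n) : phi0 K n (dgen K κ κ') = - f0 K κ κ' := by
  unfold phi0 dgen f0
  simp only [map_sub, map_mul, aeval_X]
  ring

/-- the core lemma: a z-free element of `ker (ζ ∘ φ₀)` lies in the span of the minors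
and the linear form -/
lemma core (κ κ' : Fin n) (hne : κ ≠ κ') {g : MvPolynomial (Fin n ⊕ Fin n ⊕ Unit) K}
    (hzf : ∀ m ∈ g.support, m (Sum.inr (Sum.inr ())) = 0)
    (hT : zeta K κ κ' (phi0 K n g) = 0) :
    g ∈ Ideal.span (MGset K n ∪ {dgen K κ κ'}) := by
  have h1 : phi0 K n g ∈ Ideal.span {f0 K κ κ'} := zeta_ker κ κ' hne hT
  obtain ⟨p, hp⟩ := Ideal.mem_span_singleton.mp h1
  have hbalp : ∀ w ∈ p.support, ibal w = 0 :=
    bal_factor κ κ' hp.symm (phi0_support_bal g)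
  obtain ⟨h, hhz, hph⟩ := bal_lift p hbalp
  have hkey : phi0 K n (g + dgen K κ κ' * h) = 0 := by
    rw [map_add, map_mul, phi0_dgen, hp, hph]
    ring
  have hzf2 : ∀ m ∈ (g + dgen K κ κ' * h).support, m (Sum.inr (Sum.inr ())) = 0 :=
    support_add_z hzf (support_mul_z (dgen_support_z κ κ') hhz)
  have hMG : g + dgen K κ κ' * h ∈ Ideal.span (MGset K n) := seg_ker hzf2 hkey
  have hg : g = (g + dgen K κ κ' * h) - dgen K κ κ' * h := by ring
  rw [hg]
  apply sub_mem
  · exact Ideal.span_mono Set.subset_union_left hMG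
  · exact Ideal.mul_mem_right _ _
      (Ideal.subset_span (Set.mem_union_right _ rfl))

end CoreBlock


section KeyBlock
variable {K : Type*} [Field K] {n : ℕ}

lemma r0_monomial_zero (m : (Fin n ⊕ Fin n ⊕ Unit) →₀ ℕ) (c : K)
    (hz : m (Sum.inr (Sum.inr ())) ≠ 0) : r0 K n (monomial m c) = 0 := by
  unfold r0
  exact aeval_monomial_zero m c (Sum.inr (Sum.inr ())) hz rfl

lemma r0_support (g : MvPolynomial (Fin n ⊕ Fin n ⊕ Unit) K) :
    ∀ m ∈ (r0 K n g).support, m (Sum.inr (Sum.inr ())) = 0 := by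
  intro w hw
  have hsum : r0 K n g = ∑ m ∈ g.support, r0 K n (monomial m (coeff m g)) := by
    conv_lhs => rw [← support_sum_monomial_coeff g]
    rw [map_sum]
  rw [hsum] at hw
  have := MvPolynomial.support_sum hw
  obtain ⟨m, _, hw2⟩ := Finset.mem_biUnion.mp this
  by_cases hz : m (Sum.inr (Sum.inr ())) = 0
  · rw [r0_monomial m _ hz] at hw2
    have := eq_of_mem_support_monomial hw2
    rw [← this]
    exact hz
  · rw [r0_monomial_zero m _ hz] at hw2
    simp at hw2

lemma phi0_r0 (g : MvPolynomial (Fin n ⊕ Fin n ⊕ Unit) K) :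
    phi0 K n (r0 K n g) = phi0 K n g := by
  have hcomp : (phi0 K n).comp (r0 K n) = phi0 K n := by
    apply MvPolynomial.algHom_ext
    intro v
    rcases v with i | i | u
    · simp [phi0, r0, aeval_X]
    · simp [phi0, r0, aeval_X]
    · simp [phi0, r0, aeval_X]
  exact AlgHom.congr_fun hcomp g

lemma sub_r0_mem (g : MvPolynomial (Fin n ⊕ Fin n ⊕ Unit) K) :
    g - r0 K n g ∈ Ideal.span {(X (Sum.inr (Sum.inr ())) : MvPolynomial (Fin n ⊕ Fin n ⊕ Unit) K)} := by
  unfold r0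
  apply sub_aeval_mem
  intro v
  rcases v with i | i | u
  · simp
  · simp
  · simp only [sub_zero]
    exact Ideal.subset_span rfl

lemma psi2_support {κ : Fin n} {g : MvPolynomial (Fin n ⊕ Fin n ⊕ Unit) K}
    (h : psi2 K κ g = 0) : ∀ m ∈ g.support,
    (∃ i : Fin n, m (Sum.inl i) ≠ 0) ∨ (∃ i : Fin n, i ≤ κ ∧ m (Sum.inr (Sum.inl i)) ≠ 0) := by
  intro m hm
  have hf : ∀ v : Fin n ⊕ Fin n ⊕ Unit,
      (match v with
        | Sum.inl _ => (0 : MvPolynomial (Fin n ⊕ Fin n ⊕ Unit) K)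
        | Sum.inr (Sum.inl i) => if i ≤ κ then 0 else X (Sum.inr (Sum.inl i))
        | Sum.inr (Sum.inr _) => X (Sum.inr (Sum.inr ()))) = 0 ∨
      (match v with
        | Sum.inl _ => (0 : MvPolynomial (Fin n ⊕ Fin n ⊕ Unit) K)
        | Sum.inr (Sum.inl i) => if i ≤ κ then 0 else X (Sum.inr (Sum.inl i))
        | Sum.inr (Sum.inr _) => X (Sum.inr (Sum.inr ()))) = X v := by
    intro v
    rcases v with i | i | u
    · left; rfl
    · by_cases hle : i ≤ κ
      · left; simp [hle]
      · right; simp [hle]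
    · right; rfl
  have := aeval_kill_support _ hf (by unfold psi2 at h; exact h) m hm
  obtain ⟨v, hv1, hv2⟩ := this
  rcases v with i | i | u
  · exact Or.inl ⟨i, hv1⟩
  · by_cases hle : i ≤ κ
    · exact Or.inr ⟨i, hle, hv1⟩
    · simp only [hle, if_false] at hv2
      exact absurd hv2 (MvPolynomial.X_ne_zero _)
  · exact absurd hv2 (MvPolynomial.X_ne_zero _)

lemma psi3_support {κ' : Fin n} {g : MvPolynomial (Fin n ⊕ Fin n ⊕ Unit) K}
    (h : psi3 K κ' g = 0) : ∀ m ∈ g.support,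
    (∃ j : Fin n, κ' ≤ j ∧ m (Sum.inl j) ≠ 0) ∨ (∃ i : Fin n, m (Sum.inr (Sum.inl i)) ≠ 0) := by
  intro m hm
  have hf : ∀ v : Fin n ⊕ Fin n ⊕ Unit,
      (match v with
        | Sum.inl j => if κ' ≤ j then (0 : MvPolynomial (Fin n ⊕ Fin n ⊕ Unit) K) else X (Sum.inl j)
        | Sum.inr (Sum.inl _) => 0
        | Sum.inr (Sum.inr _) => X (Sum.inr (Sum.inr ()))) = 0 ∨
      (match v with
        | Sum.inl j => if κ' ≤ j then (0 : MvPolynomial (Fin n ⊕ Fin n ⊕ Unit) K) else X (Sum.inl j)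
        | Sum.inr (Sum.inl _) => 0
        | Sum.inr (Sum.inr _) => X (Sum.inr (Sum.inr ()))) = X v := by
    intro v
    rcases v with j | i | u
    · by_cases hle : κ' ≤ j
      · left; simp [hle]
      · right; simp [hle]
    · left; rfl
    · right; rfl
  have := aeval_kill_support _ hf (by unfold psi3 at h; exact h) m hm
  obtain ⟨v, hv1, hv2⟩ := this
  rcases v with j | i | u
  · by_cases hle : κ' ≤ j
    · exact Or.inl ⟨j, hle, hv1⟩
    · simp only [hle, if_false] at hv2
      exact absurd hv2 (MvPolynomial.X_ne_zero _)
  · exact Or.inr ⟨i, hv1⟩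
  · exact absurd hv2 (MvPolynomial.X_ne_zero _)

end KeyBlock


section ClaimB
variable {K : Type*} [Field K] {n : ℕ}

lemma mgen_mem_Jp (κ κ' i j : Fin n) : mgen K i j ∈ Jp K κ κ' :=
  Ideal.subset_span (Set.mem_union_left _ (Set.mem_union_left _ (Set.mem_union_left _ ⟨i, j, rfl⟩)))

lemma dgen_mem_Jp (κ κ' : Fin n) : dgen K κ κ' ∈ Jp K κ κ' :=
  Ideal.subset_span (Set.mem_union_left _ (Set.mem_union_left _ (Set.mem_union_right _ rfl)))

lemma zx_mem_Jp (κ κ' j : Fin n) (hj : κ' ≤ j) :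
    X (Sum.inr (Sum.inr ())) * X (Sum.inl j) ∈ Jp K κ κ' :=
  Ideal.subset_span (Set.mem_union_left _ (Set.mem_union_right _ ⟨j, hj, rfl⟩))

lemma zy_mem_Jp (κ κ' i : Fin n) (hi : i ≤ κ) :
    X (Sum.inr (Sum.inr ())) * X (Sum.inr (Sum.inl i)) ∈ Jp K κ κ' :=
  Ideal.subset_span (Set.mem_union_right _ ⟨i, hi, rfl⟩)

lemma extract_var_case (κ κ' : Fin n) {m : (Fin n ⊕ Fin n ⊕ Unit) →₀ ℕ}
    (v : Fin n ⊕ Fin n ⊕ Unit) (hv : m v ≠ 0)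
    (hmem : X (Sum.inr (Sum.inr ())) * X v ∈ Jp K κ κ') :
    X (Sum.inr (Sum.inr ())) * monomial m (1:K) ∈ Jp K κ κ' := by
  obtain ⟨m', hm'⟩ := single_extract m v hv
  have hmono : monomial m (1:K) = monomial m' 1 * X v := by
    rw [hm', show (X v : MvPolynomial (Fin n ⊕ Fin n ⊕ Unit) K)
      = monomial (Finsupp.single v 1) 1 from rfl, monomial_mul, mul_one]
  rw [hmono, show X (Sum.inr (Sum.inr ())) * ((monomial m' (1:K)) * X v)
    = monomial m' (1:K) * (X (Sum.inr (Sum.inr ())) * X v) by ring]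
  exact Ideal.mul_mem_left _ _ hmem

lemma claimB (κ κ' : Fin n) (hsucc : (κ : ℕ) + 1 = (κ' : ℕ))
    {q : MvPolynomial (Fin n ⊕ Fin n ⊕ Unit) K}
    (h2 : psi2 K κ q = 0) (h3 : psi3 K κ' q = 0) :
    X (Sum.inr (Sum.inr ())) * q ∈ Jp K κ κ' := by
  have hq : q = ∑ m ∈ q.support, monomial m (coeff m q) := (support_sum_monomial_coeff q).symm
  rw [hq, Finset.mul_sum]
  apply Ideal.sum_mem
  intro m hm
  have hsplit : (monomial m) (coeff m q) = C (coeff m q) * monomial m (1:K) := by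
    rw [C_mul_monomial, mul_one]
  rw [hsplit, show X (Sum.inr (Sum.inr ())) * (C (coeff m q) * monomial m (1:K))
    = C (coeff m q) * (X (Sum.inr (Sum.inr ())) * monomial m (1:K)) by ring]
  apply Ideal.mul_mem_left
  have H2 := psi2_support h2 m hm
  have H3 := psi3_support h3 m hm
  rcases H3 with ⟨j, hj, hxj⟩ | ⟨j, hyj⟩
  · exact extract_var_case κ κ' _ hxj (zx_mem_Jp κ κ' j hj)
  · rcases H2 with ⟨i, hxi⟩ | ⟨i, hi, hyi⟩
    · by_cases hiκ' : κ' ≤ i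
      · exact extract_var_case κ κ' _ hxi (zx_mem_Jp κ κ' i hiκ')
      · by_cases hjκ : j ≤ κ
        · exact extract_var_case κ κ' _ hyj (zy_mem_Jp κ κ' j hjκ)
        · have hij : i < j := by
            rw [not_le] at hiκ' hjκ
            rw [Fin.lt_def] at *
            omega
          have hκ'j : κ' ≤ j := by
            rw [not_le] at hjκ
            rw [Fin.le_def]
            rw [Fin.lt_def] at hjκ
            omega
          have hne : (Sum.inl i : Fin n ⊕ Fin n ⊕ Unit) ≠ Sum.inr (Sum.inl j) := by simp
          obtain ⟨m₂, hm₂⟩ := double_extract m (Sum.inl i) (Sum.inr (Sum.inl j)) hne hxi hyj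
          have hmono : monomial m (1:K)
              = monomial m₂ 1 * (X (Sum.inl i) * X (Sum.inr (Sum.inl j))) := by
            rw [X_mul_X_eq, monomial_mul, one_mul, ← add_assoc, ← hm₂]
          rw [hmono]
          have hrw : X (Sum.inr (Sum.inr ()))
                * (monomial m₂ (1:K) * (X (Sum.inl i) * X (Sum.inr (Sum.inl j))))
              = monomial m₂ (1:K) * (X (Sum.inr (Sum.inl i))
                  * (X (Sum.inr (Sum.inr ())) * X (Sum.inl j))
                - X (Sum.inr (Sum.inr ())) * mgen K i j) := by
            rw [mgen]; ring
          rw [hrw]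
          apply Ideal.mul_mem_left
          apply sub_mem
          · exact Ideal.mul_mem_left _ _ (zx_mem_Jp κ κ' j hκ'j)
          · exact Ideal.mul_mem_left _ _ (mgen_mem_Jp κ κ' i j)
    · exact extract_var_case κ κ' _ hyi (zy_mem_Jp κ κ' i hi)

end ClaimB


section RadicalBlock
variable {K : Type*} [Field K] {n : ℕ}

lemma phi0_Xz : phi0 K n (X (Sum.inr (Sum.inr ()))) = 0 := by
  unfold phi0
  simp [aeval_X]

lemma Jp_theta_zero (κ κ' : Fin n) (hne : κ ≠ κ') {f : MvPolynomial (Fin n ⊕ Fin n ⊕ Unit) K}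
    (hf : f ∈ Jp K κ κ') : zeta K κ κ' (phi0 K n f) = 0 := by
  have hle : Jp K κ κ' ≤ RingHom.ker ((zeta K κ κ').comp (phi0 K n)).toRingHom := by
    rw [Jp, Ideal.span_le]
    rintro f (((⟨i, j, rfl⟩ | rfl) | ⟨j, hj, rfl⟩) | ⟨i, hi, rfl⟩) <;>
      simp only [SetLike.mem_coe, RingHom.mem_ker, AlgHom.toRingHom_eq_coe,
        RingHom.coe_coe, AlgHom.comp_apply]
    · rw [phi0_mgen, map_zero]
    · rw [phi0_dgen, map_neg, zeta_f0 κ κ' hne, neg_zero]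
    · rw [map_mul, phi0_Xz, zero_mul, map_zero]
    · rw [map_mul, phi0_Xz, zero_mul, map_zero]
  have := hle hf
  rw [RingHom.mem_ker] at this
  simpa using this

lemma Jp_psi2_zero (κ κ' : Fin n) {f : MvPolynomial (Fin n ⊕ Fin n ⊕ Unit) K}
    (hf : f ∈ Jp K κ κ') : psi2 K κ f = 0 := by
  have hle : Jp K κ κ' ≤ RingHom.ker (psi2 K κ).toRingHom := by
    rw [Jp, Ideal.span_le]
    rintro f (((⟨i, j, rfl⟩ | rfl) | ⟨j, hj, rfl⟩) | ⟨i, hi, rfl⟩) <;>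
      simp only [SetLike.mem_coe, RingHom.mem_ker, AlgHom.toRingHom_eq_coe, RingHom.coe_coe]
    · unfold psi2 mgen
      simp [aeval_X]
    · unfold psi2 dgen
      simp [aeval_X, le_refl]
    · unfold psi2
      simp [aeval_X]
    · unfold psi2
      simp [aeval_X, hi]
  have := hle hf
  rw [RingHom.mem_ker] at this
  simpa using this

lemma Jp_psi3_zero (κ κ' : Fin n) {f : MvPolynomial (Fin n ⊕ Fin n ⊕ Unit) K}
    (hf : f ∈ Jp K κ κ') : psi3 K κ' f = 0 := by
  have hle : Jp K κ κ' ≤ RingHom.ker (psi3 K κ').toRingHom := by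
    rw [Jp, Ideal.span_le]
    rintro f (((⟨i, j, rfl⟩ | rfl) | ⟨j, hj, rfl⟩) | ⟨i, hi, rfl⟩) <;>
      simp only [SetLike.mem_coe, RingHom.mem_ker, AlgHom.toRingHom_eq_coe, RingHom.coe_coe]
    · unfold psi3 mgen
      simp [aeval_X]
    · unfold psi3 dgen
      simp [aeval_X, le_refl]
    · unfold psi3
      simp [aeval_X, hj]
    · unfold psi3
      simp [aeval_X]
  have := hle hf
  rw [RingHom.mem_ker] at this
  simpa using this

/-- the key lemma -/
lemma key_lemma (κ κ' : Fin n) (hsucc : (κ : ℕ) + 1 = (κ' : ℕ))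
    {g : MvPolynomial (Fin n ⊕ Fin n ⊕ Unit) K}
    (hT : zeta K κ κ' (phi0 K n g) = 0) (h2 : psi2 K κ g = 0) (h3 : psi3 K κ' g = 0) :
    g ∈ Jp K κ κ' := by
  have hne : κ ≠ κ' := by
    intro h
    rw [h] at hsucc
    omega
  set g₀ := r0 K n g with hg₀
  obtain ⟨q, hq⟩ := Ideal.mem_span_singleton.mp (sub_r0_mem (K := K) g)
  have hcore : g₀ ∈ Ideal.span (MGset K n ∪ {dgen K κ κ'}) := by
    apply core κ κ' hne (r0_support g)
    rw [phi0_r0]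
    exact hT
  have hsub : Ideal.span (MGset K n ∪ {dgen K κ κ'}) ≤ Jp K κ κ' := by
    rw [Ideal.span_le]
    rintro f (⟨i, j, rfl⟩ | rfl)
    · exact mgen_mem_Jp κ κ' i j
    · exact dgen_mem_Jp κ κ'
  have hg₀Jp : g₀ ∈ Jp K κ κ' := hsub hcore
  have h2q : psi2 K κ q = 0 := by
    have h1 : psi2 K κ (g - g₀) = 0 := by
      rw [map_sub, h2, Jp_psi2_zero κ κ' hg₀Jp, sub_zero]
    rw [hq, map_mul] at h1
    have hXz : psi2 K κ (X (Sum.inr (Sum.inr ()))) = X (Sum.inr (Sum.inr ())) := by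
      unfold psi2; simp [aeval_X]
    rw [hXz] at h1
    rcases mul_eq_zero.mp h1 with h | h
    · exact absurd h (MvPolynomial.X_ne_zero _)
    · exact h
  have h3q : psi3 K κ' q = 0 := by
    have h1 : psi3 K κ' (g - g₀) = 0 := by
      rw [map_sub, h3, Jp_psi3_zero κ κ' hg₀Jp, sub_zero]
    rw [hq, map_mul] at h1
    have hXz : psi3 K κ' (X (Sum.inr (Sum.inr ()))) = X (Sum.inr (Sum.inr ())) := by
      unfold psi3; simp [aeval_X]
    rw [hXz] at h1
    rcases mul_eq_zero.mp h1 with h | h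
    · exact absurd h (MvPolynomial.X_ne_zero _)
    · exact h
  have hzq : X (Sum.inr (Sum.inr ())) * q ∈ Jp K κ κ' := claimB κ κ' hsucc h2q h3q
  have : g = g₀ + X (Sum.inr (Sum.inr ())) * q := by
    rw [← hq]; ring
  rw [this]
  exact add_mem hg₀Jp hzq

/-- radicality of the transformed ideal -/
lemma Jp_isRadical (κ κ' : Fin n) (hsucc : (κ : ℕ) + 1 = (κ' : ℕ)) :
    (Jp K κ κ').IsRadical := by
  have hne : κ ≠ κ' := by
    intro h
    rw [h] at hsucc
    omega
  intro y hy
  rw [Ideal.mem_radical_iff] at hy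
  obtain ⟨e, he⟩ := hy
  by_cases he0 : e = 0
  · subst he0
    rw [pow_zero] at he
    have : Jp K κ κ' = ⊤ := (Ideal.eq_top_iff_one _).mpr he
    rw [this]
    trivial
  · have hT : zeta K κ κ' (phi0 K n y) = 0 := by
      have : (zeta K κ κ' (phi0 K n y)) ^ e = 0 := by
        rw [← map_pow, ← map_pow]
        exact Jp_theta_zero κ κ' hne he
      exact pow_eq_zero_iff he0 |>.mp this
    have h2 : psi2 K κ y = 0 := by
      have : (psi2 K κ y) ^ e = 0 := by
        rw [← map_pow]
        exact Jp_psi2_zero κ κ' he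
      exact pow_eq_zero_iff he0 |>.mp this
    have h3 : psi3 K κ' y = 0 := by
      have : (psi3 K κ' y) ^ e = 0 := by
        rw [← map_pow]
        exact Jp_psi3_zero κ κ' he
      exact pow_eq_zero_iff he0 |>.mp this
    exact key_lemma κ κ' hsucc hT h2 h3

end RadicalBlock


section Equiv
variable (K : Type*) [Field K] {n : ℕ}

/-- substitution `z ↦ z + x_{κ'}` -/
noncomputable def eB (κ' : Fin n) :
    MvPolynomial (Fin n ⊕ Fin n ⊕ Unit) K →ₐ[K] MvPolynomial (Fin n ⊕ Fin n ⊕ Unit) K :=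
  aeval fun v => match v with
    | Sum.inl i => X (Sum.inl i)
    | Sum.inr (Sum.inl i) => X (Sum.inr (Sum.inl i))
    | Sum.inr (Sum.inr _) => X (Sum.inr (Sum.inr ())) + X (Sum.inl κ')

/-- substitution `z ↦ z - x_{κ'}` -/
noncomputable def eF (κ' : Fin n) :
    MvPolynomial (Fin n ⊕ Fin n ⊕ Unit) K →ₐ[K] MvPolynomial (Fin n ⊕ Fin n ⊕ Unit) K :=
  aeval fun v => match v with
    | Sum.inl i => X (Sum.inl i)
    | Sum.inr (Sum.inl i) => X (Sum.inr (Sum.inl i))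
    | Sum.inr (Sum.inr _) => X (Sum.inr (Sum.inr ())) - X (Sum.inl κ')

variable {K}

lemma eB_x (κ' i : Fin n) : eB K κ' (X (Sum.inl i)) = X (Sum.inl i) := by
  unfold eB; simp [aeval_X]

lemma eB_y (κ' i : Fin n) : eB K κ' (X (Sum.inr (Sum.inl i))) = X (Sum.inr (Sum.inl i)) := by
  unfold eB; simp [aeval_X]

lemma eB_z (κ' : Fin n) : eB K κ' (X (Sum.inr (Sum.inr ())))
    = X (Sum.inr (Sum.inr ())) + X (Sum.inl κ') := by
  unfold eB; simp [aeval_X]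

lemma eF_x (κ' i : Fin n) : eF K κ' (X (Sum.inl i)) = X (Sum.inl i) := by
  unfold eF; simp [aeval_X]

lemma eF_y (κ' i : Fin n) : eF K κ' (X (Sum.inr (Sum.inl i))) = X (Sum.inr (Sum.inl i)) := by
  unfold eF; simp [aeval_X]

lemma eF_z (κ' : Fin n) : eF K κ' (X (Sum.inr (Sum.inr ())))
    = X (Sum.inr (Sum.inr ())) - X (Sum.inl κ') := by
  unfold eF; simp [aeval_X]

lemma eF_eB (κ' : Fin n) (f : MvPolynomial (Fin n ⊕ Fin n ⊕ Unit) K) :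
    eF K κ' (eB K κ' f) = f := by
  have hcomp : (eF K κ').comp (eB K κ') = AlgHom.id K _ := by
    apply MvPolynomial.algHom_ext
    intro v
    rcases v with i | i | u
    · simp [eB_x, eF_x]
    · simp [eB_y, eF_y]
    · show eF K κ' (eB K κ' (X (Sum.inr (Sum.inr ())))) = X (Sum.inr (Sum.inr ()))
      rw [eB_z, map_add, eF_z, eF_x]
      ring
  exact AlgHom.congr_fun hcomp f

end Equiv


section Bridge
variable {K : Type*} [Field K] {n : ℕ}

lemma eB_mgen (κ' i j : Fin n) : eB K κ' (mgen K i j) = mgen K i j := by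
  unfold mgen
  rw [map_sub, map_mul, map_mul, eB_x, eB_x, eB_y, eB_y]

lemma eB_dgen (κ κ' : Fin n) : eB K κ' (dgen K κ κ') = dgen K κ κ' := by
  unfold dgen
  rw [map_sub, eB_x, eB_y]

lemma eF_mgen (κ' i j : Fin n) : eF K κ' (mgen K i j) = mgen K i j := by
  unfold mgen
  rw [map_sub, map_mul, map_mul, eF_x, eF_x, eF_y, eF_y]

lemma eF_dgen (κ κ' : Fin n) : eF K κ' (dgen K κ κ') = dgen K κ κ' := by
  unfold dgen
  rw [map_sub, eF_x, eF_y]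

lemma eB_gen2 (κ κ' J : Fin n) :
    eB K κ' (X (Sum.inr (Sum.inr ())) * X (Sum.inl J)
      - X (Sum.inl κ) * X (Sum.inr (Sum.inl J)))
    = X (Sum.inr (Sum.inr ())) * X (Sum.inl J) + (mgen K κ J + X (Sum.inl J) * dgen K κ κ') := by
  rw [map_sub, map_mul, map_mul, eB_z, eB_x, eB_x, eB_y, mgen, dgen]
  ring

lemma eB_gen3 (κ' I : Fin n) :
    eB K κ' (X (Sum.inr (Sum.inr ())) * X (Sum.inr (Sum.inl I))
      - X (Sum.inl I) * X (Sum.inr (Sum.inl κ')))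
    = X (Sum.inr (Sum.inr ())) * X (Sum.inr (Sum.inl I)) + mgen K I κ' := by
  rw [map_sub, map_mul, map_mul, eB_z, eB_y, eB_x, eB_y, mgen]
  ring

lemma eF_zx (κ κ' J : Fin n) :
    eF K κ' (X (Sum.inr (Sum.inr ())) * X (Sum.inl J))
    = (X (Sum.inr (Sum.inr ())) * X (Sum.inl J)
        - X (Sum.inl κ) * X (Sum.inr (Sum.inl J)))
      - (mgen K κ J + X (Sum.inl J) * dgen K κ κ') := by
  rw [map_mul, eF_z, eF_x, mgen, dgen]
  ring

lemma eF_zy (κ' I : Fin n) :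
    eF K κ' (X (Sum.inr (Sum.inr ())) * X (Sum.inr (Sum.inl I)))
    = (X (Sum.inr (Sum.inr ())) * X (Sum.inr (Sum.inl I))
        - X (Sum.inl I) * X (Sum.inr (Sum.inl κ'))) - mgen K I κ' := by
  rw [map_mul, eF_z, eF_y, mgen]
  ring

end Bridge

end LkProof

section XvBridge
variable {K : Type*} [Field K] {n : ℕ}

lemma xv_eq (i : ℕ) (h1 : 1 ≤ i) (h2 : i ≤ n) :
    xv K n i = X (Sum.inl (⟨i - 1, by omega⟩ : Fin n)) := by
  rw [xv, dif_pos ⟨h1, h2⟩]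

lemma yv_eq (i : ℕ) (h1 : 1 ≤ i) (h2 : i ≤ n) :
    yv K n i = X (Sum.inr (Sum.inl (⟨i - 1, by omega⟩ : Fin n))) := by
  rw [yv, dif_pos ⟨h1, h2⟩]

lemma zv_eq : zv K n = X (Sum.inr (Sum.inr ())) := rfl

lemma fin_eta (J : Fin n) (h : J.val + 1 - 1 < n) : (⟨J.val + 1 - 1, h⟩ : Fin n) = J :=
  Fin.ext (show J.val + 1 - 1 = J.val by omega)

end XvBridge

/-- **Lemma.** For every `1 ≤ k ≤ n−1`, the ideal `I_{L_k} + (x_{k+1} − y_k)` is radical. -/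
theorem LkIdeal_sup_isRadical (K : Type*) [Field K] (n k : ℕ)
    (hn : 2 ≤ n) (hk1 : 1 ≤ k) (hk2 : k ≤ n - 1) :
    (LkIdeal K n k ⊔ Ideal.span {xv K n (k + 1) - yv K n k}).IsRadical := by
  classical
  have hkn : k < n := by omega
  have hkn1 : k - 1 < n := by omega
  set κ : Fin n := ⟨k - 1, hkn1⟩ with hκ
  set κ' : Fin n := ⟨k, hkn⟩ with hκ'
  have hκv : (κ : ℕ) = k - 1 := by rw [hκ]
  have hκ'v : (κ' : ℕ) = k := by rw [hκ']
  have hsucc : (κ : ℕ) + 1 = (κ' : ℕ) := by omega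
  have hδ : xv K n (k + 1) - yv K n k = LkProof.dgen K κ κ' := by
    rw [xv_eq (k + 1) (by omega) (by omega), yv_eq k (by omega) (by omega), LkProof.dgen]
    have e1 : (⟨k + 1 - 1, by omega⟩ : Fin n) = κ' := Fin.ext (show k + 1 - 1 = (κ' : ℕ) by omega)
    have e2 : (⟨k - 1, by omega⟩ : Fin n) = κ := Fin.ext (show k - 1 = (κ : ℕ) by omega)
    rw [e1, e2]
  -- membership of the Fin-indexed generators in the target ideal
  have hgen1 : ∀ I J : Fin n, I < J → LkProof.mgen K I J ∈ LkIdeal K n k := by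
    intro I J hIJ
    rw [Fin.lt_def] at hIJ
    apply Ideal.subset_span
    apply Set.mem_union_left
    apply Set.mem_union_left
    refine ⟨I.val + 1, J.val + 1, by omega, by omega, by omega, ?_⟩
    rw [xv_eq _ (by omega) (by omega), yv_eq _ (by omega) (by omega),
      xv_eq _ (by omega) (by omega), yv_eq _ (by omega) (by omega)]
    rw [fin_eta I, fin_eta J, LkProof.mgen]
  have hgen2 : ∀ J : Fin n, κ' ≤ J →
      (X (Sum.inr (Sum.inr ())) * X (Sum.inl J)
        - X (Sum.inl κ) * X (Sum.inr (Sum.inl J))) ∈ LkIdeal K n k := by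
    intro J hJ
    rw [Fin.le_def] at hJ
    apply Ideal.subset_span
    apply Set.mem_union_left
    apply Set.mem_union_right
    refine ⟨J.val + 1, by omega, by omega, ?_⟩
    rw [zv_eq, xv_eq _ (by omega) (by omega), xv_eq k (by omega) (by omega),
      yv_eq _ (by omega) (by omega)]
    rw [fin_eta J]
  have hgen3 : ∀ I : Fin n, I ≤ κ →
      (X (Sum.inr (Sum.inr ())) * X (Sum.inr (Sum.inl I))
        - X (Sum.inl I) * X (Sum.inr (Sum.inl κ'))) ∈ LkIdeal K n k := by
    intro I hI
    rw [Fin.le_def] at hI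
    apply Ideal.subset_span
    apply Set.mem_union_right
    refine ⟨I.val + 1, by omega, by omega, ?_⟩
    rw [zv_eq, yv_eq _ (by omega) (by omega), xv_eq _ (by omega) (by omega),
      yv_eq (k + 1) (by omega) (by omega)]
    rw [fin_eta I]
    have e1 : (⟨k + 1 - 1, by omega⟩ : Fin n) = κ' := Fin.ext (show k + 1 - 1 = (κ' : ℕ) by omega)
    rw [e1]
  set T : Ideal (MvPolynomial (Fin n ⊕ Fin n ⊕ Unit) K) :=
    LkIdeal K n k ⊔ Ideal.span {xv K n (k + 1) - yv K n k} with hTdef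
  have hmgenT : ∀ I J : Fin n, LkProof.mgen K I J ∈ T := by
    intro I J
    rcases lt_trichotomy I J with h | h | h
    · exact Ideal.mem_sup_left (hgen1 I J h)
    · subst h
      have : LkProof.mgen K I I = 0 := by rw [LkProof.mgen]; ring
      rw [this]
      exact zero_mem _
    · have : LkProof.mgen K I J = -(LkProof.mgen K J I) := by
        rw [LkProof.mgen, LkProof.mgen]; ring
      rw [this]
      exact neg_mem (Ideal.mem_sup_left (hgen1 J I h))
  have hdgenT : LkProof.dgen K κ κ' ∈ T := by
    rw [← hδ]
    exact Ideal.mem_sup_right (Ideal.subset_span rfl)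
  -- forward containment
  have hfwd : T ≤ Ideal.comap (LkProof.eB K κ').toRingHom (LkProof.Jp K κ κ') := by
    rw [hTdef]
    apply sup_le
    · rw [LkIdeal, Ideal.span_le]
      rintro f ((⟨i, j, hi1, hij, hjn, rfl⟩ | ⟨j, hj1, hjn, rfl⟩) | ⟨i, hi1, hik, rfl⟩) <;>
        simp only [SetLike.mem_coe, Ideal.mem_comap, AlgHom.toRingHom_eq_coe, RingHom.coe_coe]
      · -- minors
        have hid : xv K n j * yv K n i - xv K n i * yv K n j
            = LkProof.mgen K ⟨i - 1, by omega⟩ ⟨j - 1, by omega⟩ := by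
          rw [xv_eq j (by omega) (by omega), yv_eq i (by omega) (by omega),
            xv_eq i (by omega) (by omega), yv_eq j (by omega) (by omega), LkProof.mgen]
        rw [hid, LkProof.eB_mgen]
        exact LkProof.mgen_mem_Jp κ κ' _ _
      · -- z x_j generators
        have hid : zv K n * xv K n j - xv K n k * yv K n j
            = X (Sum.inr (Sum.inr ())) * X (Sum.inl (⟨j - 1, by omega⟩ : Fin n))
              - X (Sum.inl κ) * X (Sum.inr (Sum.inl (⟨j - 1, by omega⟩ : Fin n))) := by
          rw [zv_eq, xv_eq j (by omega) (by omega), xv_eq k (by omega) (by omega),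
            yv_eq j (by omega) (by omega)]
        rw [hid, LkProof.eB_gen2]
        apply add_mem
        · exact LkProof.zx_mem_Jp κ κ' ⟨j - 1, by omega⟩ (by
            rw [Fin.le_def]
            show (κ' : ℕ) ≤ j - 1
            omega)
        · exact add_mem (LkProof.mgen_mem_Jp κ κ' _ _)
            (Ideal.mul_mem_left _ _ (LkProof.dgen_mem_Jp κ κ'))
      · -- z y_i generators
        have hid : zv K n * yv K n i - xv K n i * yv K n (k + 1)
            = X (Sum.inr (Sum.inr ())) * X (Sum.inr (Sum.inl (⟨i - 1, by omega⟩ : Fin n)))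
              - X (Sum.inl (⟨i - 1, by omega⟩ : Fin n)) * X (Sum.inr (Sum.inl κ')) := by
          rw [zv_eq, yv_eq i (by omega) (by omega), xv_eq i (by omega) (by omega),
            yv_eq (k + 1) (by omega) (by omega)]
          have e1 : (⟨k + 1 - 1, by omega⟩ : Fin n) = κ' := Fin.ext (show k + 1 - 1 = (κ' : ℕ) by omega)
          rw [e1]
        rw [hid, LkProof.eB_gen3]
        apply add_mem
        · exact LkProof.zy_mem_Jp κ κ' ⟨i - 1, by omega⟩ (by
            rw [Fin.le_def]
            show i - 1 ≤ (κ : ℕ)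
            omega)
        · exact LkProof.mgen_mem_Jp κ κ' _ _
    · rw [Ideal.span_le]
      rintro f rfl
      simp only [SetLike.mem_coe, Ideal.mem_comap, AlgHom.toRingHom_eq_coe, RingHom.coe_coe]
      rw [hδ, LkProof.eB_dgen]
      exact LkProof.dgen_mem_Jp κ κ'
  -- backward containment
  have hbwd : Ideal.map (LkProof.eF K κ').toRingHom (LkProof.Jp K κ κ') ≤ T := by
    rw [LkProof.Jp, Ideal.map_span, Ideal.span_le]
    rintro f ⟨g, hg, rfl⟩
    simp only [AlgHom.toRingHom_eq_coe, RingHom.coe_coe]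
    rcases hg with (((⟨i, j, rfl⟩ | rfl) | ⟨J, hJ, rfl⟩) | ⟨I, hI, rfl⟩)
    · rw [LkProof.eF_mgen]
      exact hmgenT i j
    · rw [LkProof.eF_dgen]
      exact hdgenT
    · rw [LkProof.eF_zx κ κ' J]
      apply sub_mem
      · exact Ideal.mem_sup_left (hgen2 J hJ)
      · exact add_mem (hmgenT κ J) (Ideal.mul_mem_left _ _ hdgenT)
    · rw [LkProof.eF_zy κ' I]
      apply sub_mem
      · exact Ideal.mem_sup_left (hgen3 I hI)
      · exact hmgenT I κ'
  -- conclude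
  intro y hy
  rw [Ideal.mem_radical_iff] at hy
  obtain ⟨e, he⟩ := hy
  have heB : (LkProof.eB K κ') y ^ e ∈ LkProof.Jp K κ κ' := by
    rw [← map_pow]
    exact Ideal.mem_comap.mp (hfwd he)
  have hyB : LkProof.eB K κ' y ∈ LkProof.Jp K κ κ' :=
    LkProof.Jp_isRadical κ κ' hsucc (Ideal.mem_radical_iff.mpr ⟨e, heB⟩)
  have hyT : LkProof.eF K κ' (LkProof.eB K κ' y) ∈ T :=
    hbwd (Ideal.mem_map_of_mem _ hyB)
  rw [LkProof.eF_eB] at hyT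
  exact hyT
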